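/- arXiv:0712.1892 — 10 statements merged into one kernel-verified Lean document; each statement's English description precedes it below -/
import Mathlib

section
/- All coefficients of the minimal polynomial P of the generic element α lie in (the image in K of) the polynomial ring S = R[t₁, …, tₙ]. In particular the constant term P(0) is (the image of) a polynomial in R[t₁, …, tₙ]. -/
open scoped TensorProduct

universe u v w



open Polynomial


lemma monic_eval_pow {R : Type*} [CommRing R] [Nontrivial R] {p : Polynomial (Polynomial R)}
    (hp : p.Monic) {N : ℕ} (hN : ∀ i ≤ p.natDegree, (p.coeff i).natDegree < N) :
    (Polynomial.eval ((Polynomial.X : Polynomial R) ^ N) p).Monic := by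
  set m := p.natDegree with hm
  have hNpos : 0 < N := lt_of_le_of_lt (Nat.zero_le _) (hN 0 (Nat.zero_le _))
  rw [eval_eq_sum_range]
  apply monic_of_natDegree_le_of_coeff_eq_one (N * m)
  · apply Polynomial.natDegree_sum_le_of_forall_le
    intro i hi
    rw [Finset.mem_range, Nat.lt_succ_iff] at hi
    by_cases him : i = m
    · subst him
      rw [hp.coeff_natDegree, one_mul, ← pow_mul, natDegree_X_pow]
    · have hilt : i < m := lt_of_le_of_ne hi him
      have key : N * i + N ≤ N * m := by
        have : N * (i + 1) ≤ N * m := Nat.mul_le_mul_left N hilt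
        rwa [Nat.mul_succ] at this
      calc (p.coeff i * (X ^ N) ^ i).natDegree
          ≤ (p.coeff i).natDegree + ((X : Polynomial R) ^ (N * i)).natDegree := by
            rw [← pow_mul]; exact natDegree_mul_le
        _ ≤ N * m := by have := hN i hi; rw [natDegree_X_pow]; omega
  · rw [finset_sum_coeff]
    rw [Finset.sum_eq_single m]
    · rw [← pow_mul, coeff_mul_X_pow', if_pos le_rfl, Nat.sub_self]
      rw [hp.coeff_natDegree, coeff_one]; simp
    · intro i hi hne
      rw [Finset.mem_range, Nat.lt_succ_iff] at hi
      have hilt : i < m := lt_of_le_of_ne hi hne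
      have key : N * i + N ≤ N * m := by
        have : N * (i + 1) ≤ N * m := Nat.mul_le_mul_left N hilt
        rwa [Nat.mul_succ] at this
      rw [← pow_mul, coeff_mul_X_pow']
      split_ifs with h
      · apply coeff_eq_zero_of_natDegree_lt
        have := hN i hi
        omega
      · rfl
    · intro h; exact absurd (Finset.self_mem_range_succ m) h

theorem polynomial_isIntegrallyClosed (R : Type*) [CommRing R] [IsDomain R]
    [IsIntegrallyClosed R] : IsIntegrallyClosed (Polynomial R) := by
  classical
  set F := FractionRing R
  set L := FractionRing (Polynomial R)
  have hCinj : Function.Injective ((algebraMap (Polynomial R) L).comp (C : R →+* Polynomial R)) :=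
    (IsFractionRing.injective (Polynomial R) L).comp C_injective
  let fLift : F →+* L := IsFractionRing.lift hCinj
  let ψ : Polynomial F →+* L := eval₂RingHom fLift (algebraMap (Polynomial R) L X)
  letI : Algebra (Polynomial F) L := ψ.toAlgebra
  letI : Algebra (Polynomial R) (Polynomial F) := (mapRingHom (algebraMap R F)).toAlgebra
  have hφinj : Function.Injective (algebraMap (Polynomial R) (Polynomial F)) :=
    Polynomial.map_injective _ (IsFractionRing.injective R F)
  have htower : (algebraMap (Polynomial R) L) =
      (algebraMap (Polynomial F) L).comp (algebraMap (Polynomial R) (Polynomial F)) := by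
    apply Polynomial.ringHom_ext
    · intro a
      show algebraMap (Polynomial R) L (C a) = ψ (mapRingHom (algebraMap R F) (C a))
      rw [coe_mapRingHom, map_C]
      show _ = eval₂ fLift _ (C (algebraMap R F a))
      rw [eval₂_C]
      exact (IsFractionRing.lift_algebraMap hCinj a).symm
    · show algebraMap (Polynomial R) L X = ψ (mapRingHom (algebraMap R F) X)
      rw [coe_mapRingHom, map_X]
      show _ = eval₂ fLift _ X
      rw [eval₂_X]
  haveI : IsScalarTower (Polynomial R) (Polynomial F) L :=
    IsScalarTower.of_algebraMap_eq' htower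
  set M : Submonoid (Polynomial R) := (nonZeroDivisors R).map (C : R →+* Polynomial R) with hM
  haveI : IsLocalization M (Polynomial F) := by
    constructor
    constructor
    · rintro ⟨y, hy⟩
      obtain ⟨r, hr, rfl⟩ := hy
      show IsUnit (mapRingHom (algebraMap R F) (C r))
      rw [coe_mapRingHom, map_C]
      refine isUnit_C.mpr (isUnit_iff_ne_zero.mpr ?_)
      have hr0 : r ≠ 0 := nonZeroDivisors.ne_zero hr
      exact fun h => hr0 ((IsFractionRing.injective R F) (by rwa [map_zero]))
    · intro z
      obtain ⟨b, hb⟩ := IsLocalization.integerNormalization_map_to_map (nonZeroDivisors R) z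
      refine ⟨⟨IsLocalization.integerNormalization (nonZeroDivisors R) z,
        ⟨C (b : R), ⟨(b : R), b.2, rfl⟩⟩⟩, ?_⟩
      show z * mapRingHom (algebraMap R F) (C (b : R)) = mapRingHom (algebraMap R F) _
      rw [coe_mapRingHom, map_C]
      show z * C ((algebraMap R F) (b:R)) =
        map (algebraMap R F) (IsLocalization.integerNormalization (nonZeroDivisors R) z)
      rw [hb, ← IsScalarTower.algebraMap_smul F (b : R) z, smul_eq_C_mul, mul_comm]
    · intro x y h
      exact ⟨1, by rw [hφinj h]⟩
  haveI : IsFractionRing (Polynomial F) L :=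
    IsFractionRing.isFractionRing_of_isDomain_of_isLocalization M (Polynomial F) L
  rw [isIntegrallyClosed_iff L]
  rintro z hz
  -- z is integral over F[X]
  have hzF : IsIntegral (Polynomial F) z := hz.tower_top
  obtain ⟨q, hq⟩ := IsIntegrallyClosed.isIntegral_iff.mp hzF
  -- the monic polynomial over R[X]
  obtain ⟨p, hpmonic, hpz⟩ := hz
  -- transfer the relation to F[X]
  have hLinj : Function.Injective (algebraMap (Polynomial F) L) := IsFractionRing.injective _ _
  set p₂ : Polynomial (Polynomial F) := p.map (algebraMap (Polynomial R) (Polynomial F)) with hp₂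
  have hqe : p₂.eval q = 0 := by
    apply hLinj
    rw [map_zero]
    have : eval₂ (algebraMap (Polynomial F) L) (algebraMap (Polynomial F) L q) p₂ =
        algebraMap (Polynomial F) L (p₂.eval q) := eval₂_hom _ _
    rw [← this, hq, hp₂, eval₂_map, ← htower]
    exact hpz
  -- Bourbaki trick
  set m := p.natDegree with hm
  set N : ℕ := 1 + q.natDegree + (Finset.range (m + 1)).sup (fun i => (p.coeff i).natDegree)
    with hNdef
  have hNq : q.natDegree < N := by omega
  have hNc : ∀ i ≤ m, (p.coeff i).natDegree < N := by
    intro i hi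
    have : (p.coeff i).natDegree ≤ (Finset.range (m + 1)).sup (fun i => (p.coeff i).natDegree) :=
      Finset.le_sup (f := fun i => (p.coeff i).natDegree) (Finset.mem_range.mpr (Nat.lt_succ_of_le hi))
    omega
  set w : Polynomial F := X ^ N with hw
  set s : Polynomial F := q - w with hs
  set p₄ : Polynomial (Polynomial F) := p₂.comp (X + C w) with hp₄
  have hp₄eval : p₄.eval s = 0 := by
    rw [hp₄, eval_comp, eval_add, eval_X, eval_C, hs, sub_add_cancel, hqe]
  have hsdvd : s ∣ p₄.coeff 0 := by
    have hX : (X : Polynomial (Polynomial F)) ∣ p₄ - C (p₄.coeff 0) := by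
      rw [X_dvd_iff]; simp
    obtain ⟨k, hk⟩ := hX
    have := congrArg (Polynomial.eval s) hk
    rw [eval_sub, hp₄eval, eval_C, eval_mul, eval_X] at this
    exact ⟨-(k.eval s), by linear_combination -this⟩
  have hc0 : p₄.coeff 0 = algebraMap (Polynomial R) (Polynomial F) (p.eval ((X : Polynomial R) ^ N)) := by
    have hXN : algebraMap (Polynomial R) (Polynomial F) ((X : Polynomial R) ^ N) = w := by
      show mapRingHom (algebraMap R F) (X ^ N) = w
      rw [map_pow, coe_mapRingHom, map_X, hw]
    rw [coeff_zero_eq_eval_zero, hp₄, eval_comp, eval_add, eval_X, eval_C, zero_add, hp₂,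
      ← hXN, eval_map, eval₂_hom]
  have hG : (p.eval ((X : Polynomial R) ^ N)).Monic := monic_eval_pow hpmonic hNc
  have hnegs : (-s).Monic := by
    rw [hs, neg_sub]
    show ((X ^ N : Polynomial F) - q).Monic
    exact monic_X_pow_sub (lt_of_le_of_lt degree_le_natDegree (Nat.cast_lt.mpr hNq))
  have hsdvd2 : (-s) ∣ (p.eval ((X : Polynomial R) ^ N)).map (algebraMap R F) := by
    have heq : (p.eval ((X : Polynomial R) ^ N)).map (algebraMap R F) = p₄.coeff 0 := by
      rw [hc0]; rfl
    rw [heq]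
    exact (neg_dvd).mpr hsdvd
  obtain ⟨g', hg'⟩ := IsIntegrallyClosed.eq_map_mul_C_of_dvd (K := F) hG hsdvd2
  rw [hnegs.leadingCoeff, map_one, mul_one] at hg'
  refine ⟨X ^ N - g', ?_⟩
  rw [htower, RingHom.comp_apply, ← hq]
  congr 1
  show mapRingHom (algebraMap R F) (X ^ N - g') = q
  rw [map_sub, map_pow, coe_mapRingHom, map_X, ← hw]
  have : map (algebraMap R F) g' = -s := hg'
  rw [this, hs]
  ring


theorem isIntegrallyClosed_of_ringEquiv {A B : Type*} [CommRing A] [IsDomain A] [CommRing B]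
    [IsDomain B] [IsIntegrallyClosed A] (e : A ≃+* B) : IsIntegrallyClosed B := by
  classical
  set FB := FractionRing B
  letI : Algebra A FB := ((algebraMap B FB).comp (e : A →+* B)).toAlgebra
  have halg : ∀ a : A, algebraMap A FB a = algebraMap B FB (e a) := fun _ => rfl
  have hinj : Function.Injective (algebraMap A FB) :=
    (IsFractionRing.injective B FB).comp e.injective
  haveI : IsFractionRing A FB := by
    constructor
    constructor
    · rintro ⟨y, hy⟩
      have hy0 : y ≠ 0 := nonZeroDivisors.ne_zero hy
      have : algebraMap A FB y ≠ 0 := fun h => hy0 (hinj (by rwa [map_zero]))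
      exact isUnit_iff_ne_zero.mpr this
    · intro z
      obtain ⟨⟨a, s⟩, h⟩ := IsLocalization.surj (nonZeroDivisors B) z
      have hs0 : (s : B) ≠ 0 := nonZeroDivisors.ne_zero s.2
      refine ⟨⟨e.symm a, ⟨e.symm s, ?_⟩⟩, ?_⟩
      · rw [mem_nonZeroDivisors_iff_ne_zero]
        exact fun h0 => hs0 (by rw [← e.apply_symm_apply (s : B), h0, map_zero])
      · simp only [halg, RingEquiv.apply_symm_apply]
        exact h
    · intro x y h
      exact ⟨1, by rw [hinj h]⟩
  rw [isIntegrallyClosed_iff FB]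
  intro x hx
  obtain ⟨p, hpm, hpz⟩ := hx
  have hxA : IsIntegral A x := by
    refine ⟨p.map (e.symm : B →+* A), hpm.map _, ?_⟩
    rw [Polynomial.eval₂_map]
    have : (algebraMap A FB).comp (e.symm : B →+* A) = algebraMap B FB := by
      ext b; show algebraMap B FB (e (e.symm b)) = _; rw [e.apply_symm_apply]
    rw [this]
    exact hpz
  obtain ⟨y, hy⟩ := IsIntegrallyClosed.isIntegral_iff.mp hxA
  exact ⟨e y, hy⟩

theorem mvPolynomial_isIntegrallyClosed (R : Type*) [CommRing R] [IsDomain R]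
    [IsIntegrallyClosed R] (n : ℕ) : IsIntegrallyClosed (MvPolynomial (Fin n) R) := by
  induction n with
  | zero =>
      exact isIntegrallyClosed_of_ringEquiv (MvPolynomial.isEmptyRingEquiv R (Fin 0)).symm
  | succ k ih =>
      haveI := ih
      haveI : IsIntegrallyClosed (Polynomial (MvPolynomial (Fin k) R)) :=
        polynomial_isIntegrallyClosed _
      exact isIntegrallyClosed_of_ringEquiv
        ((MvPolynomial.finSuccEquiv R k).toRingEquiv).symm

/-- All coefficients of the minimal polynomial `P` of the generic element `α` of a
finite free algebra `A` over an integrally closed domain `R` lie in the image in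
`K = Frac(R[t₁,…,tₙ])` of the polynomial ring `S = R[t₁,…,tₙ]`. -/
theorem coeffs_of_minpoly_of_generic_element_mem_range
    {R : Type u} [CommRing R] [IsDomain R] [IsIntegrallyClosed R]
    {n : ℕ} (hn : 2 ≤ n)
    {A : Type v} [Ring A] [Algebra R A] (e : Module.Basis (Fin n) R A)
    {K : Type w} [Field K] [Algebra (MvPolynomial (Fin n) R) K]
    [IsFractionRing (MvPolynomial (Fin n) R) K]
    [Algebra R K] [IsScalarTower R (MvPolynomial (Fin n) R) K]
    (α : K ⊗[R] A)
    (hα : α = ∑ i, algebraMap (MvPolynomial (Fin n) R) K (MvPolynomial.X i) ⊗ₜ[R] e i)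
    (P : Polynomial K) (hP : P = minpoly K α) :
    ∀ j : ℕ, P.coeff j ∈ (algebraMap (MvPolynomial (Fin n) R) K).range := by
  classical
  set S := MvPolynomial (Fin n) R with hS
  haveI : IsIntegrallyClosed S := mvPolynomial_isIntegrallyClosed R n
  haveI : Module.Finite R A := Module.Finite.of_basis e
  set β : S ⊗[R] A := ∑ i, (MvPolynomial.X i : S) ⊗ₜ[R] e i with hβdef
  obtain ⟨q, hqmonic, hq0⟩ := IsIntegral.of_finite S β
  let φ : S ⊗[R] A →ₐ[R] K ⊗[R] A :=
    Algebra.TensorProduct.map (IsScalarTower.toAlgHom R S K) (AlgHom.id R A)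
  have hφβ : φ β = α := by
    rw [hβdef, hα, map_sum]
    simp [φ, Algebra.TensorProduct.map_tmul]
    rfl
  have hcomp : (φ : S ⊗[R] A →+* K ⊗[R] A).comp (algebraMap S (S ⊗[R] A)) =
      algebraMap S (K ⊗[R] A) := by
    refine RingHom.ext fun s => ?_
    simp [φ, Algebra.TensorProduct.algebraMap_apply]
  have hmap0 : Polynomial.aeval α (q.map (algebraMap S K)) = 0 := by
    rw [Polynomial.aeval_def, Polynomial.eval₂_map,
      ← IsScalarTower.algebraMap_eq S K (K ⊗[R] A), ← hφβ]
    show Polynomial.eval₂ _ ((φ : S ⊗[R] A →+* K ⊗[R] A) β) q = 0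
    rw [← hcomp, ← Polynomial.hom_eval₂, hq0, map_zero]
  have hαint : IsIntegral K α := ⟨q.map (algebraMap S K), hqmonic.map _, hmap0⟩
  have hdvd : minpoly K α ∣ q.map (algebraMap S K) := minpoly.dvd K α hmap0
  obtain ⟨g', hg'⟩ := IsIntegrallyClosed.eq_map_mul_C_of_dvd (K := K) hqmonic hdvd
  rw [(minpoly.monic hαint).leadingCoeff, map_one, mul_one] at hg'
  intro j
  rw [hP, ← hg', Polynomial.coeff_map]
  exact ⟨g'.coeff j, rfl⟩
end

section
/- Uniqueness of the determinant: let D ∈ S = R[t₁, …, tₙ] be a homogeneous polynomial of degree d such that (i) D evaluated at the coordinates of the unit element 1 of A equals 1, and (ii) the degree-d polynomial Q(T) := D evaluated at the coordinates of T·1 − α (an element of (S[T]) ⊗_R A, coordinates taken in S[T]) satisfies Q(α) = 0 in A ⊗_R K. Then D = det_A, i.e. the image of D in K equals (−1)^d·P(0). -/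
open scoped TensorProduct

universe u v w

set_option maxRecDepth 8000
set_option maxHeartbeats 1000000

open Polynomial in
lemma coeff_prod_at' {ι T : Type*} [CommRing T] (s : Finset ι) (p : ι → T[X]) (m : ι → ℕ)
    (h : ∀ i ∈ s, (p i).natDegree ≤ m i) :
    (∏ i ∈ s, p i).coeff (∑ i ∈ s, m i) = ∏ i ∈ s, (p i).coeff (m i) := by
  classical
  induction s using Finset.induction with
  | empty => simp
  | @insert a s ha ih =>
    rw [Finset.prod_insert ha, Finset.sum_insert ha, Finset.prod_insert ha,
      coeff_mul_add_eq_of_natDegree_le (h a (Finset.mem_insert_self a s))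
        ((natDegree_prod_le _ _).trans
          (Finset.sum_le_sum fun i hi => h i (Finset.mem_insert_of_mem hi))),
      ih fun i hi => h i (Finset.mem_insert_of_mem hi)]


/-- Uniqueness of the determinant: if `D ∈ R[t₁,…,tₙ]` is homogeneous of degree `d`,
takes the value `1` at the coordinates of the unit `1` of `A`, and the polynomial
`Q(T) = D(coordinates of T·1 − α)` kills the generic element `α`, then `D = det_A`,
i.e. the image of `D` in `K` is `(−1)^d P(0)`. -/
theorem det_unique
    {R : Type u} [CommRing R] [IsDomain R] [IsIntegrallyClosed R]
    {n : ℕ} (hn : 2 ≤ n)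
    {A : Type v} [Ring A] [Algebra R A] (e : Module.Basis (Fin n) R A)
    {K : Type w} [Field K] [Algebra (MvPolynomial (Fin n) R) K]
    [IsFractionRing (MvPolynomial (Fin n) R) K]
    [Algebra R K] [IsScalarTower R (MvPolynomial (Fin n) R) K]
    (α : K ⊗[R] A)
    (hα : α = ∑ i, algebraMap (MvPolynomial (Fin n) R) K (MvPolynomial.X i) ⊗ₜ[R] e i)
    (d : ℕ) (hd : d = (minpoly K α).natDegree)
    (D : MvPolynomial (Fin n) R)
    (hhom : D.IsHomogeneous d)
    (hone : MvPolynomial.eval (fun i => e.repr 1 i) D = 1)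
    (hkill : Polynomial.aeval α
      (Polynomial.map (algebraMap (MvPolynomial (Fin n) R) K)
        (MvPolynomial.aeval
          (fun i => Polynomial.C (algebraMap R (MvPolynomial (Fin n) R) (e.repr 1 i))
              * Polynomial.X - Polynomial.C (MvPolynomial.X i)) D
          : Polynomial (MvPolynomial (Fin n) R))) = 0) :
    algebraMap (MvPolynomial (Fin n) R) K D = (-1) ^ d * (minpoly K α).coeff 0 := by
  classical
  set f : Fin n → Polynomial (MvPolynomial (Fin n) R) := fun i =>
    Polynomial.C (algebraMap R (MvPolynomial (Fin n) R) (e.repr 1 i)) * Polynomial.X - Polynomial.C (MvPolynomial.X i)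
    with hf
  set p : Polynomial (MvPolynomial (Fin n) R) := MvPolynomial.aeval f D with hp
  -- basic facts about f
  have hf1 : ∀ i, (f i).natDegree ≤ 1 := by
    intro i
    refine (Polynomial.natDegree_sub_le _ _).trans (max_le ?_ ?_)
    · exact (Polynomial.natDegree_mul_le).trans (by simp)
    · simp
  have hfc1 : ∀ i, (f i).coeff 1 = algebraMap R (MvPolynomial (Fin n) R) (e.repr 1 i) := by
    intro i; simp [hf, Polynomial.coeff_C]
  have hfe0 : ∀ i, (f i).eval 0 = -(MvPolynomial.X i) := by
    intro i; simp [hf]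
  have hdm : ∀ m ∈ D.support, ∑ i ∈ m.support, m i = d := by
    intro m hm
    have := hhom (MvPolynomial.mem_support_iff.mp hm)
    change Finsupp.weight (fun _ => 1) m = d at this
    rw [← Finsupp.degree_eq_weight_one] at this
    simpa [Finsupp.degree_apply] using this
  -- rewrite p as a sum over monomials
  have hpsum : p = ∑ m ∈ D.support,
      Polynomial.C (algebraMap R (MvPolynomial (Fin n) R) (D.coeff m)) * ∏ i ∈ m.support, f i ^ m i := by
    rw [hp]
    conv_lhs => rw [← MvPolynomial.support_sum_monomial_coeff D]
    rw [map_sum]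
    refine Finset.sum_congr rfl fun m hm => ?_
    rw [MvPolynomial.aeval_monomial, Polynomial.algebraMap_apply]
    rfl
  have hterm_deg : ∀ m ∈ D.support,
      (Polynomial.C (algebraMap R (MvPolynomial (Fin n) R) (D.coeff m)) * ∏ i ∈ m.support, f i ^ m i).natDegree ≤ d := by
    intro m hm
    refine Polynomial.natDegree_mul_le.trans ?_
    rw [Polynomial.natDegree_C, zero_add]
    refine (Polynomial.natDegree_prod_le _ _).trans ?_
    rw [← hdm m hm]
    refine Finset.sum_le_sum fun i _ => ?_
    exact Polynomial.natDegree_pow_le.trans (by simpa using Nat.mul_le_mul_left (m i) (hf1 i))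
  have hpdeg : p.natDegree ≤ d := by
    rw [hpsum]
    exact Polynomial.natDegree_sum_le_of_forall_le _ _ hterm_deg
  -- top coefficient
  have hpd : p.coeff d = 1 := by
    rw [hpsum, Polynomial.finset_sum_coeff]
    have : ∀ m ∈ D.support,
        (Polynomial.C (algebraMap R (MvPolynomial (Fin n) R) (D.coeff m)) * ∏ i ∈ m.support, f i ^ m i).coeff d
          = algebraMap R (MvPolynomial (Fin n) R) (D.coeff m * ∏ i ∈ m.support, (e.repr 1 i) ^ m i) := by
      intro m hm
      rw [Polynomial.coeff_C_mul, ← hdm m hm,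
        coeff_prod_at' m.support (fun i => f i ^ m i) (fun i => m i)
          (fun i _ => Polynomial.natDegree_pow_le.trans
            (by simpa using Nat.mul_le_mul_left (m i) (hf1 i))),
        map_mul, map_prod]
      congr 1
      refine Finset.prod_congr rfl fun i _ => ?_
      have := Polynomial.coeff_pow_of_natDegree_le (m := m i) (hf1 i)
      rw [mul_one] at this
      rw [this, hfc1, map_pow]
    have hone' : MvPolynomial.eval (⇑(e.repr 1)) D = 1 := hone
    rw [Finset.sum_congr rfl this, ← map_sum, ← MvPolynomial.eval_eq, hone', map_one]
  -- constant coefficient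
  have hp0 : p.coeff 0 = (-1 : (MvPolynomial (Fin n) R)) ^ d * D := by
    rw [hpsum, Polynomial.finset_sum_coeff]
    have : ∀ m ∈ D.support,
        (Polynomial.C (algebraMap R (MvPolynomial (Fin n) R) (D.coeff m)) * ∏ i ∈ m.support, f i ^ m i).coeff 0
          = (-1 : (MvPolynomial (Fin n) R)) ^ d * MvPolynomial.monomial m (D.coeff m) := by
      intro m hm
      rw [Polynomial.coeff_zero_eq_eval_zero, Polynomial.eval_mul, Polynomial.eval_C,
        Polynomial.eval_prod]
      have hprod : ∀ i ∈ m.support, ((f i) ^ (m i)).eval 0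
          = (-1 : MvPolynomial (Fin n) R) ^ (m i) * (MvPolynomial.X i) ^ (m i) := by
        intro i _
        rw [Polynomial.eval_pow, hfe0 i, ← neg_one_mul, mul_pow]
      rw [Finset.prod_congr rfl hprod, Finset.prod_mul_distrib,
        Finset.prod_pow_eq_pow_sum, hdm m hm,
        MvPolynomial.monomial_eq, MvPolynomial.algebraMap_eq]
      unfold Finsupp.prod
      ring
    rw [Finset.sum_congr rfl this, ← Finset.mul_sum,
      MvPolynomial.support_sum_monomial_coeff D]
  -- the mapped polynomial Q
  set Q : Polynomial K := p.map (algebraMap (MvPolynomial (Fin n) R) K) with hQ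
  have hQd : Q.coeff d = 1 := by rw [hQ, Polynomial.coeff_map, hpd, map_one]
  have hQdeg : Q.natDegree = d := by
    refine le_antisymm (Polynomial.natDegree_map_le.trans hpdeg) ?_
    exact Polynomial.le_natDegree_of_ne_zero (by rw [hQd]; exact one_ne_zero)
  have hQmonic : Q.Monic := by
    rw [Polynomial.Monic, Polynomial.leadingCoeff, hQdeg]; exact hQd
  have hkill' : Polynomial.aeval α Q = 0 := hkill
  have hint : IsIntegral K α := ⟨Q, hQmonic, hkill'⟩
  have hmono := minpoly.monic hint
  have hdvd : minpoly K α ∣ Q := minpoly.dvd K α hkill'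
  have hQeq : Q = minpoly K α :=
    Polynomial.eq_of_monic_of_dvd_of_natDegree_le hmono hQmonic hdvd (by rw [hQdeg, hd])
  rw [← hQeq, hQ, Polynomial.coeff_map, hp0, map_mul, map_pow, map_neg, map_one,
    ← mul_assoc, ← mul_pow, neg_mul_neg, one_mul, one_pow, one_mul]
end

section
/- Compatibility with flat base change: let φ : R → R' be a flat ring homomorphism where R' is also an integrally closed integral domain, and let A' = A ⊗_R R' with the basis induced by e₁, …, eₙ. Then the minimal polynomial P' of the generic element of A' over Frac(R'[t₁, …, tₙ]) is the image of P under the induced map, and det_{A'} is the image of det_A under the induced map R[t₁, …, tₙ] → R'[t₁, …, tₙ]. In particular the degree of algebraicity of A' equals d. -/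
set_option maxHeartbeats 1000000
set_option synthInstance.maxHeartbeats 400000


open scoped TensorProduct

universe u v w u' w'

/-- If the rows of a matrix over a field are linearly independent (in the sense that
`vecMul` is injective), the matrix has a right inverse. -/
private lemma exists_right_inverse_of_rows_independent {K : Type*} [Field K]
    {d n : ℕ} (M : Matrix (Fin d) (Fin n) K)
    (h : ∀ x : Fin d → K, Matrix.vecMul x M = 0 → x = 0) :
    ∃ N : Matrix (Fin n) (Fin d) K, M * N = 1 := by
  have hinj : LinearMap.ker (Matrix.toLin' M.transpose) = ⊥ := by
    rw [LinearMap.ker_eq_bot']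
    intro x hx
    apply h
    rw [← Matrix.mulVec_transpose]
    simpa [Matrix.toLin'_apply] using hx
  obtain ⟨g, hg⟩ := (Matrix.toLin' M.transpose).exists_leftInverse_of_injective hinj
  refine ⟨(LinearMap.toMatrix' g).transpose, ?_⟩
  have h2 : LinearMap.toMatrix' g * M.transpose = 1 := by
    have h3 := congrArg LinearMap.toMatrix' hg
    rwa [LinearMap.toMatrix'_comp, LinearMap.toMatrix'_toLin', LinearMap.toMatrix'_id] at h3
  calc M * (LinearMap.toMatrix' g).transpose = (LinearMap.toMatrix' g * M.transpose).transpose := by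
        rw [Matrix.transpose_mul, Matrix.transpose_transpose]
    _ = 1 := by rw [h2, Matrix.transpose_one]

/-- Linear independence of the rows of a matrix is preserved by mapping the entries
along a ring homomorphism of fields. -/
private lemma rows_independent_map {K K' : Type*} [Field K] [Field K']
    (f : K →+* K') {d n : ℕ} (M : Matrix (Fin d) (Fin n) K)
    (h : ∀ x : Fin d → K, Matrix.vecMul x M = 0 → x = 0)
    (x : Fin d → K') (hx : Matrix.vecMul x (M.map f) = 0) : x = 0 := by
  obtain ⟨N, hN⟩ := exists_right_inverse_of_rows_independent M h
  have hN' : M.map f * N.map f = 1 := by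
    rw [← Matrix.map_mul, hN]
    exact Matrix.map_one f (map_zero f) (map_one f)
  have h2 := congrArg (fun y => Matrix.vecMul y (N.map f)) hx
  simpa [Matrix.vecMul_vecMul, hN', Matrix.vecMul_one, Matrix.zero_vecMul] using h2

/-- Compatibility of the minimal polynomial of the generic element (and hence of the
determinant) with flat base change `R → R'` between integrally closed domains:
the minimal polynomial `P'` of the generic element of `A' = R' ⊗[R] A` is the image of
`P`, coefficientwise via `R[t₁,…,tₙ] → R'[t₁,…,tₙ]`; in particular `deg P' = d`, and
`det_{A'}` is the image of `det_A`. -/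
theorem det_flat_base_change
    {R : Type u} [CommRing R] [IsDomain R] [IsIntegrallyClosed R]
    {n : ℕ} (hn : 2 ≤ n)
    {A : Type v} [Ring A] [Algebra R A] (e : Module.Basis (Fin n) R A)
    {K : Type w} [Field K] [Algebra (MvPolynomial (Fin n) R) K]
    [IsFractionRing (MvPolynomial (Fin n) R) K]
    [Algebra R K] [IsScalarTower R (MvPolynomial (Fin n) R) K]
    (α : K ⊗[R] A)
    (hα : α = ∑ i, algebraMap (MvPolynomial (Fin n) R) K (MvPolynomial.X i) ⊗ₜ[R] e i)
    (d : ℕ) (hd : d = (minpoly K α).natDegree)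
    {R' : Type u'} [CommRing R'] [IsDomain R'] [IsIntegrallyClosed R']
    [Algebra R R'] [Module.Flat R R']
    {K' : Type w'} [Field K'] [Algebra (MvPolynomial (Fin n) R') K']
    [IsFractionRing (MvPolynomial (Fin n) R') K']
    [Algebra R' K'] [IsScalarTower R' (MvPolynomial (Fin n) R') K']
    (α' : K' ⊗[R'] (R' ⊗[R] A))
    (hα' : α' = ∑ i, algebraMap (MvPolynomial (Fin n) R') K' (MvPolynomial.X i)
      ⊗ₜ[R'] (Algebra.TensorProduct.basis R' e i)) :
    (minpoly K' α').natDegree = d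
    ∧ (∀ (j : ℕ) (c : MvPolynomial (Fin n) R),
        algebraMap (MvPolynomial (Fin n) R) K c = (minpoly K α).coeff j →
        algebraMap (MvPolynomial (Fin n) R') K'
            (MvPolynomial.map (algebraMap R R') c) = (minpoly K' α').coeff j)
    ∧ ∀ c : MvPolynomial (Fin n) R,
        algebraMap (MvPolynomial (Fin n) R) K c = (-1) ^ d * (minpoly K α).coeff 0 →
        algebraMap (MvPolynomial (Fin n) R') K' (MvPolynomial.map (algebraMap R R') c)
          = (-1) ^ d * (minpoly K' α').coeff 0 := by
  classical
  subst hd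
  set d := (minpoly K α).natDegree with hd
  -- the base ring map is injective because `R'` is a flat `R`-algebra and a domain
  have hφ : Function.Injective (algebraMap R R') := by
    have h0 : ∀ r : R, algebraMap R R' r = 0 → r = 0 := by
      intro r hr
      by_contra hr0
      have hinj : Function.Injective (LinearMap.lsmul R R r) := by
        intro x y hxy
        simp only [LinearMap.lsmul_apply, smul_eq_mul] at hxy
        exact mul_left_cancel₀ hr0 hxy
      have h2 := Module.Flat.lTensor_preserves_injective_linearMap
        (M := R') (LinearMap.lsmul R R r) hinj
      have h3 : (LinearMap.lsmul R R r).lTensor R' ((1 : R') ⊗ₜ[R] (1 : R)) = 0 := by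
        rw [LinearMap.lTensor_tmul]
        have h4 : (LinearMap.lsmul R R r) (1 : R) = r • (1 : R) := rfl
        rw [h4, TensorProduct.tmul_smul, TensorProduct.smul_tmul', Algebra.smul_def, hr,
          zero_mul, TensorProduct.zero_tmul]
      have h5 : ((1 : R') ⊗ₜ[R] (1 : R) : R' ⊗[R] R) = 0 := h2 (by rw [h3, map_zero])
      have h6 := congrArg (TensorProduct.rid R R') h5
      simp only [TensorProduct.rid_tmul, one_smul, map_zero] at h6
      exact one_ne_zero h6
    intro a b hab
    have h7 := h0 (a - b) (by rw [map_sub, hab, sub_self])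
    exact sub_eq_zero.mp h7
  have hψ : Function.Injective (MvPolynomial.map (σ := Fin n) (algebraMap R R')) :=
    MvPolynomial.map_injective _ hφ
  have hg : Function.Injective ((algebraMap (MvPolynomial (Fin n) R') K').comp
      (MvPolynomial.map (σ := Fin n) (algebraMap R R'))) :=
    (IsFractionRing.injective (MvPolynomial (Fin n) R') K').comp hψ
  set f : K →+* K' := IsFractionRing.lift hg with hfdef
  have hf : ∀ s : MvPolynomial (Fin n) R,
      f (algebraMap (MvPolynomial (Fin n) R) K s)
        = algebraMap (MvPolynomial (Fin n) R') K' (MvPolynomial.map (algebraMap R R') s) :=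
    fun s => IsFractionRing.lift_algebraMap hg s
  -- set up the scalar tower `R → R' → K'`
  letI : Algebra R K' := ((algebraMap R' K').comp (algebraMap R R')).toAlgebra
  haveI : IsScalarTower R R' K' := IsScalarTower.of_algebraMap_eq' rfl
  haveI : SMulCommClass R' R K' := SMulCommClass.symm R R' K'
  -- `f` as an `R`-algebra homomorphism
  have hfcomm : ∀ r : R, f (algebraMap R K r) = algebraMap R K' r := by
    intro r
    have h2 : (MvPolynomial.map (algebraMap R R'))
        (algebraMap R (MvPolynomial (Fin n) R) r)
        = algebraMap R' (MvPolynomial (Fin n) R') (algebraMap R R' r) := by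
      simp [MvPolynomial.algebraMap_eq]
    rw [IsScalarTower.algebraMap_apply R (MvPolynomial (Fin n) R) K r, hf, h2,
      ← IsScalarTower.algebraMap_apply R' (MvPolynomial (Fin n) R') K']
    rfl
  let fAlg : K →ₐ[R] K' := { f with commutes' := hfcomm }
  -- construct the ring homomorphism `F : K ⊗[R] A → K' ⊗[R'] (R' ⊗[R] A)`
  let g₁ : K →ₐ[R] K' ⊗[R'] (R' ⊗[R] A) :=
    (Algebra.TensorProduct.includeLeft (R := R') (S := R) (A := K')
      (B := R' ⊗[R] A)).comp fAlg
  let g₂ : A →ₐ[R] K' ⊗[R'] (R' ⊗[R] A) :=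
    ((Algebra.TensorProduct.includeRight (R := R') (A := K')
        (B := R' ⊗[R] A)).restrictScalars R).comp
      (Algebra.TensorProduct.includeRight (R := R) (A := R') (B := A))
  have hcomm : ∀ (x : K) (y : A), Commute (g₁ x) (g₂ y) := by
    intro x y
    have hx : g₁ x = algebraMap K' (K' ⊗[R'] (R' ⊗[R] A)) (fAlg x) := by
      simp [g₁, Algebra.TensorProduct.algebraMap_apply]
    rw [hx]
    exact Algebra.commutes (fAlg x) (g₂ y)
  let F : (K ⊗[R] A) →ₐ[R] K' ⊗[R'] (R' ⊗[R] A) := Algebra.TensorProduct.lift g₁ g₂ hcomm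
  have hFtmul : ∀ (c : K) (a : A), F (c ⊗ₜ[R] a) = f c ⊗ₜ[R'] ((1 : R') ⊗ₜ[R] a) := by
    intro c a
    have h1 : F (c ⊗ₜ[R] a) = g₁ c * g₂ a := Algebra.TensorProduct.lift_tmul g₁ g₂ hcomm c a
    rw [h1]
    show (f c ⊗ₜ[R'] (1 : R' ⊗[R] A)) * ((1 : K') ⊗ₜ[R'] ((1 : R') ⊗ₜ[R] a)) = _
    rw [Algebra.TensorProduct.tmul_mul_tmul, mul_one, one_mul]
  have hFalg : ∀ c : K,
      F (algebraMap K (K ⊗[R] A) c) = algebraMap K' (K' ⊗[R'] (R' ⊗[R] A)) (f c) := by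
    intro c
    rw [Algebra.TensorProduct.algebraMap_apply, Algebra.TensorProduct.algebraMap_apply]
    have : (algebraMap K K c) = c := rfl
    rw [this, hFtmul]
    rfl
  have hFsmul : ∀ (c : K) (v : K ⊗[R] A), F (c • v) = f c • F v := by
    intro c v
    rw [Algebra.smul_def, map_mul, hFalg]
    exact (Algebra.smul_def (f c) (F v)).symm
  -- the bases
  set B : Module.Basis (Fin n) K (K ⊗[R] A) := Algebra.TensorProduct.basis K e with hB
  set B' : Module.Basis (Fin n) K' (K' ⊗[R'] (R' ⊗[R] A)) :=
    Algebra.TensorProduct.basis K' (Algebra.TensorProduct.basis R' e) with hB'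
  have hFB : ∀ i, F (B i) = B' i := by
    intro i
    rw [hB, hB', Algebra.TensorProduct.basis_apply, Algebra.TensorProduct.basis_apply,
      Algebra.TensorProduct.basis_apply, hFtmul, map_one]
  -- `F` maps `α` to `α'`
  have hFα : F α = α' := by
    rw [hα, hα', map_sum]
    refine Finset.sum_congr rfl fun i _ => ?_
    rw [hFtmul, hf, MvPolynomial.map_X, Algebra.TensorProduct.basis_apply]
  -- integrality
  haveI : Module.Finite K (K ⊗[R] A) := Module.Finite.of_basis B
  haveI : Module.Finite K' (K' ⊗[R'] (R' ⊗[R] A)) := Module.Finite.of_basis B'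
  have hint : IsIntegral K α := IsIntegral.of_finite K α
  have hint' : IsIntegral K' α' := IsIntegral.of_finite K' α'
  -- the image of the minimal polynomial annihilates `α'`
  have hPα' : Polynomial.aeval α' ((minpoly K α).map f) = 0 := by
    rw [Polynomial.aeval_def, Polynomial.eval₂_map]
    have hcomp : (algebraMap K' (K' ⊗[R'] (R' ⊗[R] A))).comp f
        = (F : (K ⊗[R] A) →+* K' ⊗[R'] (R' ⊗[R] A)).comp (algebraMap K (K ⊗[R] A)) := by
      ext c
      simp only [RingHom.comp_apply]
      exact (hFalg c).symm
    rw [hcomp, ← hFα]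
    have h9 : (F : (K ⊗[R] A) →+* (K' ⊗[R'] (R' ⊗[R] A)))
        (Polynomial.eval₂ (algebraMap K (K ⊗[R] A)) α (minpoly K α))
        = Polynomial.eval₂
            ((F : (K ⊗[R] A) →+* (K' ⊗[R'] (R' ⊗[R] A))).comp (algebraMap K (K ⊗[R] A)))
            ((F : (K ⊗[R] A) →+* (K' ⊗[R'] (R' ⊗[R] A))) α) (minpoly K α) :=
      Polynomial.hom_eval₂ _ _ _ _
    have h10 : Polynomial.eval₂ (algebraMap K (K ⊗[R] A)) α (minpoly K α) = 0 := by
      have h11 := minpoly.aeval K α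
      rwa [Polynomial.aeval_def] at h11
    rw [h10, map_zero] at h9
    exact h9.symm
  have hdvd : minpoly K' α' ∣ (minpoly K α).map f := minpoly.dvd K' α' hPα'
  have hmap_ne : (minpoly K α).map f ≠ 0 := ((minpoly.monic hint).map f).ne_zero
  have hmapdeg : ((minpoly K α).map f).natDegree = d := Polynomial.natDegree_map f
  -- coordinates of powers of `α`
  set M : Matrix (Fin d) (Fin n) K := fun k i => B.repr (α ^ (k : ℕ)) i with hM
  have hMrows : ∀ x : Fin d → K, Matrix.vecMul x M = 0 → x = 0 := by
    intro x hx
    have hli : LinearIndependent K fun i : Fin d => α ^ (i : ℕ) := linearIndependent_pow α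
    have h0 : ∑ k : Fin d, x k • α ^ (k : ℕ) = 0 := by
      apply B.repr.injective
      rw [map_zero, map_sum]
      ext i
      rw [Finset.sum_apply']
      have hterm : ∀ k : Fin d, (B.repr (x k • α ^ (k : ℕ))) i = x k * M k i := by
        intro k
        rw [map_smul]
        simp [hM, smul_eq_mul]
      rw [Finset.sum_congr rfl fun k _ => hterm k]
      have h12 := congrFun hx i
      simpa [Matrix.vecMul, dotProduct] using h12
    funext k
    exact Fintype.linearIndependent_iff.mp hli x h0 k
  -- representation of the image of a vector
  have hrepr : ∀ (v : K ⊗[R] A) (i : Fin n), B'.repr (F v) i = f (B.repr v i) := by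
    intro v i
    conv_lhs => rw [← B.sum_repr v]
    rw [map_sum]
    have h1 : ∀ j, F (B.repr v j • B j) = f (B.repr v j) • B' j := by
      intro j; rw [hFsmul, hFB]
    rw [Finset.sum_congr rfl fun j _ => h1 j]
    have h2 := B'.repr_sum_self (fun j => f (B.repr v j))
    rw [h2]
  -- the powers of `α'` below `d` are linearly independent over `K'`
  have hliK' : ∀ g : Fin d → K', ∑ k : Fin d, g k • α' ^ (k : ℕ) = 0 → g = 0 := by
    intro g hg
    have h0 : ∀ i, Matrix.vecMul g (M.map f) i = 0 := by
      intro i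
      have h1 := congrArg (fun w => (B'.repr w) i) hg
      simp only [map_zero, map_sum, Finsupp.coe_zero, Pi.zero_apply] at h1
      rw [Finset.sum_apply'] at h1
      have h2 : ∀ k : Fin d, (B'.repr (g k • α' ^ (k : ℕ))) i = g k * f (M k i) := by
        intro k
        have h3 : α' ^ (k : ℕ) = F (α ^ (k : ℕ)) := by rw [map_pow, hFα]
        rw [map_smul, Finsupp.smul_apply, smul_eq_mul, h3, hrepr]
      rw [Finset.sum_congr rfl (fun k _ => h2 k)] at h1
      simpa [Matrix.vecMul, dotProduct, Matrix.map_apply] using h1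
    exact rows_independent_map f M hMrows g (funext h0)
  -- lower bound for the degree
  have hd_le : d ≤ (minpoly K' α').natDegree := by
    by_contra hlt
    push_neg at hlt
    have h0 : ∑ k : Fin d, (minpoly K' α').coeff (k : ℕ) • α' ^ (k : ℕ) = 0 := by
      have h1 := minpoly.aeval K' α'
      rw [Polynomial.aeval_eq_sum_range' hlt] at h1
      rw [Fin.sum_univ_eq_sum_range (fun k => (minpoly K' α').coeff k • α' ^ k)]
      exact h1
    have h2 := hliK' _ h0
    have h3 : (minpoly K' α').coeff ((minpoly K' α').natDegree) = 0 := by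
      have := congrFun h2 ⟨(minpoly K' α').natDegree, hlt⟩
      simpa using this
    rw [Polynomial.coeff_natDegree, (minpoly.monic hint').leadingCoeff] at h3
    exact one_ne_zero h3
  have hle : (minpoly K' α').natDegree ≤ d :=
    hmapdeg ▸ Polynomial.natDegree_le_of_dvd hdvd hmap_ne
  have hdeg : (minpoly K' α').natDegree = d := le_antisymm hle hd_le
  -- the minimal polynomial of `α'` is the image of that of `α`
  obtain ⟨q, hq⟩ := hdvd
  have hm' : (minpoly K' α').Monic := minpoly.monic hint'
  have hq1 : q = 1 := by
    have hqne : q ≠ 0 := by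
      rintro rfl
      rw [mul_zero] at hq
      exact hmap_ne hq
    have hdq : q.natDegree = 0 := by
      have h5 := congrArg Polynomial.natDegree hq
      rw [Polynomial.natDegree_mul (minpoly.ne_zero hint') hqne, hmapdeg, hdeg] at h5
      omega
    have hqm : q.Monic := by
      have h6 := congrArg Polynomial.leadingCoeff hq
      rw [Polynomial.leadingCoeff_mul, hm'.leadingCoeff, one_mul,
        ((minpoly.monic hint).map f).leadingCoeff] at h6
      exact h6.symm
    exact Polynomial.eq_one_of_monic_natDegree_zero hqm hdq
  have heq : minpoly K' α' = (minpoly K α).map f := by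
    rw [hq, hq1, mul_one]
  refine ⟨hdeg, ?_, ?_⟩
  · intro j c hc
    rw [heq, Polynomial.coeff_map, ← hc, hf]
  · intro c hc
    rw [heq, Polynomial.coeff_map, ← hf c, hc, map_mul, map_pow, map_neg, map_one]
end

section
/- Invariance under automorphisms: let f : A → A be an R-algebra automorphism. Then the determinant is invariant under f: for every commutative R-algebra T and every x ∈ T ⊗_R A, Det((id_T ⊗ f)(x)) = Det(x). In particular det_A(f(a)) = det_A(a) for all a ∈ A, where det_A(a) denotes det_A evaluated at the coordinates of a in the basis e₁, …, eₙ. -/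
open scoped TensorProduct
open MvPolynomial

universe u v w x

namespace DetAux

variable {R : Type u} [CommRing R] {n : ℕ} {A : Type v} [Ring A] [Algebra R A]

noncomputable def Φ (e : Module.Basis (Fin n) R A) (g : A →ₗ[R] A) :
    MvPolynomial (Fin n) R →ₐ[R] MvPolynomial (Fin n) R :=
  aeval (fun i => ∑ j, e.repr (g (e j)) i • X j)

lemma Φ_X (e : Module.Basis (Fin n) R A) (g : A →ₗ[R] A) (i : Fin n) :
    Φ e g (X i) = ∑ j, e.repr (g (e j)) i • X j := by
  simp [Φ]

lemma repr_comp (e : Module.Basis (Fin n) R A) (g h : A →ₗ[R] A) (i j : Fin n) :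
    e.repr (g (h (e j))) i = ∑ m, e.repr (h (e j)) m * e.repr (g (e m)) i := by
  conv_lhs => rw [show g (h (e j)) = ∑ m, e.repr (h (e j)) m • g (e m) by
    conv_lhs => rw [← Module.Basis.sum_repr e (h (e j))]
    rw [map_sum]; simp]
  simp [Finsupp.finset_sum_apply]

lemma Φ_comp (e : Module.Basis (Fin n) R A) (g h : A →ₗ[R] A) :
    (Φ e h).comp (Φ e g) = Φ e (g ∘ₗ h) := by
  refine MvPolynomial.algHom_ext fun i => ?_
  simp only [AlgHom.comp_apply, Φ_X, map_sum, map_smul, LinearMap.comp_apply]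
  simp_rw [repr_comp e g h, Finset.sum_smul, Finset.smul_sum, smul_smul]
  rw [Finset.sum_comm]
  exact Finset.sum_congr rfl fun m _ => Finset.sum_congr rfl fun j _ => by rw [mul_comm]

lemma Φ_id (e : Module.Basis (Fin n) R A) : Φ e LinearMap.id = AlgHom.id R _ := by
  refine MvPolynomial.algHom_ext fun i => ?_
  simp [Φ_X, Module.Basis.repr_self, Finsupp.single_apply]

noncomputable def ΦE (e : Module.Basis (Fin n) R A) (f : A ≃ₐ[R] A) :
    MvPolynomial (Fin n) R ≃ₐ[R] MvPolynomial (Fin n) R :=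
  AlgEquiv.ofAlgHom (Φ e f.toLinearMap) (Φ e f.symm.toLinearMap)
    (by rw [Φ_comp, show f.symm.toLinearMap ∘ₗ f.toLinearMap = LinearMap.id from by
          ext a; simp, Φ_id])
    (by rw [Φ_comp, show f.toLinearMap ∘ₗ f.symm.toLinearMap = LinearMap.id from by
          ext a; simp, Φ_id])

lemma ΦE_apply (e : Module.Basis (Fin n) R A) (f : A ≃ₐ[R] A) (p : MvPolynomial (Fin n) R) :
    ΦE e f p = Φ e f.toLinearMap p := rfl

lemma aeval_Φ {T : Type*} [CommSemiring T] [Algebra R T] (e : Module.Basis (Fin n) R A)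
    (g : A →ₗ[R] A) (u : Fin n → T) (p : MvPolynomial (Fin n) R) :
    aeval u (Φ e g p) = aeval (fun i => ∑ j, e.repr (g (e j)) i • u j) p := by
  have : (aeval u).comp (Φ e g) = aeval (fun i => ∑ j, e.repr (g (e j)) i • u j) := by
    refine MvPolynomial.algHom_ext fun i => ?_
    simp [Φ_X]
  exact DFunLike.congr_fun this p

lemma repr_apply (e : Module.Basis (Fin n) R A) (g : A →ₗ[R] A) (a : A) (i : Fin n) :
    e.repr (g a) i = ∑ j, e.repr (g (e j)) i • e.repr a j := by
  conv_lhs => rw [show g a = ∑ j, e.repr a j • g (e j) by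
    conv_lhs => rw [← Module.Basis.sum_repr e a]
    rw [map_sum]; simp]
  simp [Finsupp.finset_sum_apply, smul_eq_mul, mul_comm]

lemma repr_baseChange {T : Type*} [CommRing T] [Algebra R T] (e : Module.Basis (Fin n) R A)
    (g : A →ₗ[R] A) (x : T ⊗[R] A) (i : Fin n) :
    ((Algebra.TensorProduct.basis T e).repr (LinearMap.baseChange T g x)) i
      = ∑ j, e.repr (g (e j)) i • ((Algebra.TensorProduct.basis T e).repr x) j := by
  induction x using TensorProduct.induction_on with
  | zero => simp
  | tmul t a =>
    rw [show LinearMap.baseChange T g (t ⊗ₜ[R] a) = t ⊗ₜ[R] g a from rfl]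
    rw [Algebra.TensorProduct.basis_repr_tmul, Algebra.TensorProduct.basis_repr_tmul]
    simp only [Finsupp.smul_apply, Finsupp.mapRange_apply, smul_eq_mul]
    rw [repr_apply e g a i, map_sum, Finset.mul_sum]
    refine Finset.sum_congr rfl fun j _ => ?_
    rw [smul_eq_mul, map_mul, Algebra.smul_def]
    ring
  | add y z hy hz =>
    rw [map_add, map_add, map_add]
    simp only [Finsupp.add_apply]
    rw [hy, hz, ← Finset.sum_add_distrib]
    exact Finset.sum_congr rfl fun j _ => (smul_add _ _ _).symm

lemma key {T : Type*} [CommRing T] [Algebra R T] (e : Module.Basis (Fin n) R A) (f : A ≃ₐ[R] A)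
    (p : MvPolynomial (Fin n) R) (hp : ΦE e f p = p) (u v : Fin n → T)
    (hv : ∀ i, v i = ∑ j, e.repr (f.toLinearMap (e j)) i • u j) :
    aeval v p = aeval u p := by
  rw [funext hv, ← aeval_Φ, ← ΦE_apply, hp]

end DetAux

/-- Invariance of the determinant under algebra automorphisms: if `f : A ≃ₐ[R] A`, then
for every commutative `R`-algebra `T` and every `x ∈ T ⊗[R] A`,
`Det((id_T ⊗ f)(x)) = Det(x)`; in particular `det_A(f(a)) = det_A(a)` for all `a ∈ A`. -/
theorem det_invariant_under_automorphism
    {R : Type u} [CommRing R] [IsDomain R] [IsIntegrallyClosed R]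
    {n : ℕ} (hn : 2 ≤ n)
    {A : Type v} [Ring A] [Algebra R A] (e : Module.Basis (Fin n) R A)
    {K : Type w} [Field K] [Algebra (MvPolynomial (Fin n) R) K]
    [IsFractionRing (MvPolynomial (Fin n) R) K]
    [Algebra R K] [IsScalarTower R (MvPolynomial (Fin n) R) K]
    (α : K ⊗[R] A)
    (hα : α = ∑ i, algebraMap (MvPolynomial (Fin n) R) K (MvPolynomial.X i) ⊗ₜ[R] e i)
    (d : ℕ) (hd : d = (minpoly K α).natDegree)
    (detA : MvPolynomial (Fin n) R)
    (hdetA : algebraMap (MvPolynomial (Fin n) R) K detA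
      = (-1) ^ d * (minpoly K α).coeff 0)
    (f : A ≃ₐ[R] A) :
    (∀ (T : Type x) [CommRing T] [Algebra R T], ∀ x : T ⊗[R] A,
      MvPolynomial.aeval
          (fun i => ((Algebra.TensorProduct.basis T e).repr
            (LinearMap.baseChange T f.toLinearMap x)) i) detA
        = MvPolynomial.aeval
            (fun i => ((Algebra.TensorProduct.basis T e).repr x) i) detA)
    ∧ ∀ a : A,
        MvPolynomial.eval (fun i => e.repr (f a) i) detA
          = MvPolynomial.eval (fun i => e.repr a i) detA := by
  classical
  let φ : MvPolynomial (Fin n) R ≃ₐ[R] MvPolynomial (Fin n) R := DetAux.ΦE e f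
  let σ : K ≃ₐ[R] K := IsFractionRing.algEquivOfAlgEquiv φ
  have hσ : ∀ p : MvPolynomial (Fin n) R,
      σ (algebraMap (MvPolynomial (Fin n) R) K p)
        = algebraMap (MvPolynomial (Fin n) R) K (φ p) := fun p =>
    IsFractionRing.algEquivOfAlgEquiv_algebraMap φ p
  have hsmul : ∀ (c : R) (p : MvPolynomial (Fin n) R),
      algebraMap (MvPolynomial (Fin n) R) K (c • p)
        = c • algebraMap (MvPolynomial (Fin n) R) K p := fun c p => by
    rw [Algebra.smul_def, Algebra.smul_def, map_mul, ← IsScalarTower.algebraMap_apply]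
  let G : K ⊗[R] A →ₐ[R] K ⊗[R] A :=
    Algebra.TensorProduct.map σ.toAlgHom (AlgHom.id R A)
  let F : K ⊗[R] A ≃ₐ[K] K ⊗[R] A :=
    Algebra.TensorProduct.congr AlgEquiv.refl f
  have hGF : G α = F α := by
    rw [hα, map_sum, map_sum]
    have hGt : ∀ i, G (algebraMap (MvPolynomial (Fin n) R) K (MvPolynomial.X i) ⊗ₜ[R] e i)
        = ∑ j, (algebraMap (MvPolynomial (Fin n) R) K (MvPolynomial.X j))
            ⊗ₜ[R] (e.repr (f.toLinearMap (e j)) i • e i) := by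
      intro i
      rw [show G (algebraMap (MvPolynomial (Fin n) R) K (MvPolynomial.X i) ⊗ₜ[R] e i)
          = σ (algebraMap (MvPolynomial (Fin n) R) K (MvPolynomial.X i)) ⊗ₜ[R] e i from rfl]
      rw [hσ, DetAux.ΦE_apply, DetAux.Φ_X, map_sum, TensorProduct.sum_tmul]
      refine Finset.sum_congr rfl fun j _ => ?_
      rw [hsmul, TensorProduct.smul_tmul]
    have hFt : ∀ i, F (algebraMap (MvPolynomial (Fin n) R) K (MvPolynomial.X i) ⊗ₜ[R] e i)
        = algebraMap (MvPolynomial (Fin n) R) K (MvPolynomial.X i) ⊗ₜ[R] f (e i) := fun i => rfl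
    simp_rw [hGt, hFt]
    rw [Finset.sum_comm]
    refine Finset.sum_congr rfl fun j _ => ?_
    rw [← TensorProduct.tmul_sum]
    congr 1
    exact Module.Basis.sum_repr e (f (e j))
  have hfin : Module.Finite K (K ⊗[R] A) :=
    Module.Finite.of_basis (Algebra.TensorProduct.basis K e)
  have hint : IsIntegral K α := IsIntegral.of_finite K α
  set P := minpoly K α with hPdef
  have hPmonic : P.Monic := minpoly.monic hint
  have hcomm : (G : K ⊗[R] A →+* K ⊗[R] A).comp (algebraMap K (K ⊗[R] A))
      = (algebraMap K (K ⊗[R] A)).comp (σ : K →+* K) := by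
    ext c
    show G (algebraMap K (K ⊗[R] A) c) = algebraMap K (K ⊗[R] A) (σ c)
    rw [Algebra.TensorProduct.algebraMap_apply, Algebra.TensorProduct.algebraMap_apply]
    rfl
  have h0 : (G : K ⊗[R] A →+* K ⊗[R] A) (Polynomial.eval₂ (algebraMap K (K ⊗[R] A)) α P)
      = Polynomial.eval₂ ((G : K ⊗[R] A →+* K ⊗[R] A).comp (algebraMap K (K ⊗[R] A)))
        ((G : K ⊗[R] A →+* K ⊗[R] A) α) P := Polynomial.hom_eval₂ _ _ _ _
  have h1 : Polynomial.eval₂ (algebraMap K (K ⊗[R] A)) α P = 0 := by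
    rw [← Polynomial.aeval_def]
    exact minpoly.aeval K α
  have haev : Polynomial.aeval (G α) (P.map (σ : K →+* K)) = 0 := by
    rw [Polynomial.aeval_def, Polynomial.eval₂_map, ← hcomm]
    exact h0.symm.trans (by rw [h1, map_zero])
  have hminG : minpoly K (G α) = P := by
    rw [hGF, minpoly.algEquiv_eq F α]
  have hPσ : P.map (σ : K →+* K) = P := by
    have hmono : (P.map (σ : K →+* K)).Monic := hPmonic.map _
    have hdvd : minpoly K (G α) ∣ P.map (σ : K →+* K) := minpoly.dvd K _ haev
    have hdeg : (P.map (σ : K →+* K)).natDegree ≤ (minpoly K (G α)).natDegree := by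
      rw [hminG, hPmonic.natDegree_map]
    have h2 := Polynomial.eq_of_monic_of_dvd_of_natDegree_le
      (hminG ▸ hPmonic) hmono hdvd hdeg
    rw [h2, hminG]
  have hcoeff : σ (P.coeff 0) = P.coeff 0 := by
    conv_rhs => rw [← hPσ, Polynomial.coeff_map]
    rfl
  have hφdet : φ detA = detA := by
    apply IsFractionRing.injective (MvPolynomial (Fin n) R) K
    rw [← hσ, hdetA, map_mul, map_pow, map_neg, map_one, hcoeff]
  constructor
  · intro T _ _ x
    exact DetAux.key e f detA hφdet _ _
      (fun i => DetAux.repr_baseChange e f.toLinearMap x i)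
  · intro a
    have h3 := DetAux.key (T := R) e f detA hφdet (fun j => e.repr a j)
      (fun i => e.repr (f a) i) (fun i => DetAux.repr_apply e f.toLinearMap a i)
    rw [← MvPolynomial.coe_aeval_eq_eval, ← MvPolynomial.coe_aeval_eq_eval]
    exact h3
end

section
/- Invariance under antiautomorphisms: let f : A → A be an R-linear bijection with f(1) = 1 and f(a·b) = f(b)·f(a) for all a, b ∈ A (an R-algebra antiautomorphism). Then the determinant is invariant under f: for every commutative R-algebra T and every x ∈ T ⊗_R A, Det((id_T ⊗ f)(x)) = Det(x). -/
open scoped TensorProduct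

universe u v w x

open Polynomial in
/-- If `G` is a `ρ`-semilinear antiautomorphism-like map fixing `α`, then the
constant coefficient of the minimal polynomial of `α` is fixed by `ρ`. -/
theorem aux_minpoly_coeff_zero_fix {K : Type*} [Field K] {B : Type*} [Ring B] [Algebra K B]
    (ρ : K ≃+* K) (G : B →+ B)
    (Gsmul : ∀ (c : K) (x : B), G (c • x) = ρ c • G x)
    (Gmul : ∀ x y : B, G (x * y) = G y * G x) (Gone : G 1 = 1)
    (α : B) (hGα : G α = α) :
    ρ ((minpoly K α).coeff 0) = (minpoly K α).coeff 0 := by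
  have hpow : ∀ k : ℕ, G (α ^ k) = α ^ k := by
    intro k
    induction k with
    | zero => simpa using Gone
    | succ k ih =>
      rw [pow_succ, Gmul, hGα, ih]
      exact (pow_succ' α k).symm.trans (pow_succ α k)
  have haev : ∀ p : K[X], Polynomial.aeval α (p.map (ρ : K →+* K)) = G (Polynomial.aeval α p) := by
    intro p
    rw [Polynomial.aeval_eq_sum_range' (Nat.lt_succ_of_le Polynomial.natDegree_map_le),
      Polynomial.aeval_eq_sum_range, map_sum]
    refine Finset.sum_congr rfl fun i _ => ?_
    rw [Polynomial.coeff_map, Gsmul, hpow]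
    rfl
  set P := minpoly K α with hP
  have h0 : Polynomial.aeval α (P.map (ρ : K →+* K)) = 0 := by
    rw [haev, minpoly.aeval, map_zero]
  by_cases hint : IsIntegral K α
  · have hdvd : P ∣ P.map (ρ : K →+* K) := minpoly.dvd K α h0
    have hmon : P.Monic := minpoly.monic hint
    have hmapmon : (P.map (ρ : K →+* K)).Monic := hmon.map _
    obtain ⟨c, hc⟩ := hdvd
    have hPne : P ≠ 0 := hmon.ne_zero
    have hcne : c ≠ 0 := by
      rintro rfl
      rw [mul_zero] at hc
      exact hmapmon.ne_zero hc
    have hdeg : P.natDegree + c.natDegree = P.natDegree := by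
      rw [← Polynomial.natDegree_mul hPne hcne, ← hc, hmon.natDegree_map]
    have hcdeg : c.natDegree = 0 := by omega
    have hlead : c.coeff 0 = 1 := by
      have h1 : (P.map (ρ : K →+* K)).leadingCoeff = P.leadingCoeff * c.leadingCoeff := by
        rw [hc, Polynomial.leadingCoeff_mul]
      rw [hmapmon.leadingCoeff, hmon.leadingCoeff, one_mul] at h1
      rw [Polynomial.leadingCoeff, hcdeg] at h1
      exact h1.symm
    have hc1 : c = 1 := by
      rw [Polynomial.eq_C_of_natDegree_eq_zero hcdeg, hlead, map_one]
    have hPP : P.map (ρ : K →+* K) = P := by rw [hc, hc1, mul_one]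
    have := congrArg (fun q : K[X] => q.coeff 0) hPP
    simpa [Polynomial.coeff_map] using this
  · rw [hP, minpoly.eq_zero hint]
    simp

/-- Invariance of the determinant under antiautomorphisms: if `f : A → A` is an
`R`-linear bijection with `f 1 = 1` and `f (a·b) = f b · f a`, then for every
commutative `R`-algebra `T` and every `x ∈ T ⊗[R] A`, `Det((id_T ⊗ f)(x)) = Det(x)`. -/
theorem det_invariant_under_antiautomorphism
    {R : Type u} [CommRing R] [IsDomain R] [IsIntegrallyClosed R]
    {n : ℕ} (hn : 2 ≤ n)
    {A : Type v} [Ring A] [Algebra R A] (e : Module.Basis (Fin n) R A)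
    {K : Type w} [Field K] [Algebra (MvPolynomial (Fin n) R) K]
    [IsFractionRing (MvPolynomial (Fin n) R) K]
    [Algebra R K] [IsScalarTower R (MvPolynomial (Fin n) R) K]
    (α : K ⊗[R] A)
    (hα : α = ∑ i, algebraMap (MvPolynomial (Fin n) R) K (MvPolynomial.X i) ⊗ₜ[R] e i)
    (d : ℕ) (hd : d = (minpoly K α).natDegree)
    (detA : MvPolynomial (Fin n) R)
    (hdetA : algebraMap (MvPolynomial (Fin n) R) K detA
      = (-1) ^ d * (minpoly K α).coeff 0)
    (f : A →ₗ[R] A) (hbij : Function.Bijective f)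
    (hone : f 1 = 1) (hanti : ∀ a b : A, f (a * b) = f b * f a) :
    ∀ (T : Type x) [CommRing T] [Algebra R T], ∀ x : T ⊗[R] A,
      MvPolynomial.aeval
          (fun i => ((Algebra.TensorProduct.basis T e).repr
            (LinearMap.baseChange T f x)) i) detA
        = MvPolynomial.aeval
            (fun i => ((Algebra.TensorProduct.basis T e).repr x) i) detA := by
  classical
  set M : Matrix (Fin n) (Fin n) R := LinearMap.toMatrix e e f with hM
  set finv : A →ₗ[R] A := (LinearEquiv.ofBijective f hbij).symm.toLinearMap with hfinv
  have hffinv : f ∘ₗ finv = LinearMap.id := by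
    ext a
    simpa [hfinv] using (LinearEquiv.ofBijective f hbij).apply_symm_apply a
  have hfinvf : finv ∘ₗ f = LinearMap.id := by
    ext a
    simpa [hfinv] using (LinearEquiv.ofBijective f hbij).symm_apply_apply a
  set N : Matrix (Fin n) (Fin n) R := LinearMap.toMatrix e e finv with hN
  have hMN : M * N = 1 := by
    rw [hM, hN, ← LinearMap.toMatrix_comp e e e, hffinv, LinearMap.toMatrix_id]
  have hNM : N * M = 1 := by
    rw [hM, hN, ← LinearMap.toMatrix_comp e e e, hfinvf, LinearMap.toMatrix_id]
  -- substitutions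
  have comp_id : ∀ P Q : Matrix (Fin n) (Fin n) R, P * Q = 1 →
      (MvPolynomial.aeval (fun j => ∑ i, MvPolynomial.C (Q j i) * MvPolynomial.X i)).comp
        (MvPolynomial.aeval (fun j => ∑ i, MvPolynomial.C (P j i) * MvPolynomial.X i))
      = AlgHom.id R (MvPolynomial (Fin n) R) := by
    intro P Q h
    apply MvPolynomial.algHom_ext
    intro j
    simp only [AlgHom.comp_apply, MvPolynomial.aeval_X, AlgHom.id_apply, map_sum, map_mul,
      MvPolynomial.aeval_C, MvPolynomial.algebraMap_eq]
    calc ∑ i, MvPolynomial.C (P j i) * ∑ k, MvPolynomial.C (Q i k) * MvPolynomial.X k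
        = ∑ i, ∑ k, MvPolynomial.C (P j i * Q i k) * MvPolynomial.X k := by
          simp [Finset.mul_sum, mul_assoc]
      _ = ∑ k, MvPolynomial.C ((P * Q) j k) * MvPolynomial.X k := by
          rw [Finset.sum_comm]
          refine Finset.sum_congr rfl fun k _ => ?_
          rw [← Finset.sum_mul, ← map_sum, Matrix.mul_apply]
      _ = MvPolynomial.X j := by
          rw [h]
          simp [Matrix.one_apply, apply_ite MvPolynomial.C, ite_mul]
  set φM : Fin n → (MvPolynomial (Fin n) R) := fun j => ∑ i, MvPolynomial.C (M j i) * MvPolynomial.X i with hφM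
  set φN : Fin n → (MvPolynomial (Fin n) R) := fun j => ∑ i, MvPolynomial.C (N j i) * MvPolynomial.X i with hφN
  set σ : (MvPolynomial (Fin n) R) ≃ₐ[R] (MvPolynomial (Fin n) R) := AlgEquiv.ofAlgHom (MvPolynomial.aeval φM) (MvPolynomial.aeval φN)
    (comp_id N M hNM) (comp_id M N hMN) with hσ
  set τ : K ≃+* K := IsFractionRing.ringEquivOfRingEquiv (K := K) (L := K) (σ : (MvPolynomial (Fin n) R) ≃+* (MvPolynomial (Fin n) R)) with hτ
  have htau : ∀ s : MvPolynomial (Fin n) R, τ (algebraMap (MvPolynomial (Fin n) R) K s) = algebraMap (MvPolynomial (Fin n) R) K (MvPolynomial.aeval φM s) := by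
    intro s
    simpa [hτ, hσ] using IsFractionRing.ringEquivOfRingEquiv_algebraMap (σ : (MvPolynomial (Fin n) R) ≃+* (MvPolynomial (Fin n) R)) s
  set ρ : K ≃+* K := τ.symm with hρ
  have halgSC : ∀ r : R, algebraMap (MvPolynomial (Fin n) R) K (MvPolynomial.C r) = algebraMap R K r := by
    intro r
    rw [← MvPolynomial.algebraMap_eq, ← IsScalarTower.algebraMap_apply]
  have hτfix : ∀ r : R, τ (algebraMap R K r) = algebraMap R K r := by
    intro r
    rw [IsScalarTower.algebraMap_apply R (MvPolynomial (Fin n) R) K, htau]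
    simp [MvPolynomial.algebraMap_eq, halgSC]
  have hρfix : ∀ r : R, ρ (algebraMap R K r) = algebraMap R K r := by
    intro r
    rw [hρ, ← hτfix r, RingEquiv.symm_apply_apply, hτfix]
  set ρLin : K →ₗ[R] K :=
    { toFun := ρ
      map_add' := by simp
      map_smul' := by
        intro r k
        simp only [Algebra.smul_def, map_mul, hρfix, RingHom.id_apply] } with hρLin
  set G : K ⊗[R] A →ₗ[R] K ⊗[R] A := TensorProduct.map ρLin f with hG
  have hGtmul : ∀ (k : K) (a : A), G (k ⊗ₜ[R] a) = ρ k ⊗ₜ[R] f a := by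
    intro k a
    simp [hG, hρLin]
  have Gsmul : ∀ (c : K) (y : K ⊗[R] A), G (c • y) = ρ c • G y := by
    intro c y
    induction y using TensorProduct.induction_on with
    | zero => simp
    | tmul k a =>
      rw [TensorProduct.smul_tmul', hGtmul, hGtmul, TensorProduct.smul_tmul', smul_eq_mul,
        smul_eq_mul, map_mul]
    | add y z hy hz => rw [smul_add, map_add, hy, hz, map_add, smul_add]
  have Gmul : ∀ y z : K ⊗[R] A, G (y * z) = G z * G y := by
    intro y z
    induction y using TensorProduct.induction_on with
    | zero => simp
    | tmul k a =>
      induction z using TensorProduct.induction_on with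
      | zero => simp
      | tmul l b =>
        rw [Algebra.TensorProduct.tmul_mul_tmul, hGtmul, hGtmul, hGtmul,
          Algebra.TensorProduct.tmul_mul_tmul, map_mul, hanti, mul_comm (ρ k) (ρ l)]
      | add z1 z2 h1 h2 => rw [mul_add, map_add, h1, h2, map_add, add_mul]
    | add y1 y2 h1 h2 => rw [add_mul, map_add, h1, h2, map_add, mul_add]
  have Gone : G 1 = 1 := by
    rw [Algebra.TensorProduct.one_def, hGtmul, map_one, hone]
  -- f on basis
  have hfe : ∀ i, f (e i) = ∑ j, M j i • e j := by
    intro i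
    conv_lhs => rw [← Module.Basis.sum_repr e (f (e i))]
    refine Finset.sum_congr rfl fun j _ => ?_
    rw [hM, LinearMap.toMatrix_apply]
  set t : Fin n → K := fun i => algebraMap (MvPolynomial (Fin n) R) K (MvPolynomial.X i) with ht
  have hτt : ∀ j, τ (t j) = ∑ i, M j i • t i := by
    intro j
    rw [ht, htau]
    simp only [MvPolynomial.aeval_X, φM, map_sum, map_mul, halgSC]
    refine Finset.sum_congr rfl fun i _ => ?_
    rw [Algebra.smul_def]
  have hρt : ∀ j, ∑ i, M j i • ρ (t i) = t j := by
    intro j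
    have : ∑ i, M j i • ρ (t i) = ρ (τ (t j)) := by
      rw [hτt, map_sum]
      refine Finset.sum_congr rfl fun i _ => ?_
      exact (map_smul ρLin (M j i) (t i)).symm
    rw [this, hρ, RingEquiv.symm_apply_apply]
  have hGα : G α = α := by
    rw [hα, map_sum]
    calc ∑ i, G (t i ⊗ₜ[R] e i) = ∑ i, ∑ j, M j i • (ρ (t i) ⊗ₜ[R] e j) := by
          refine Finset.sum_congr rfl fun i _ => ?_
          rw [hGtmul, hfe, TensorProduct.tmul_sum]
          refine Finset.sum_congr rfl fun j _ => ?_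
          rw [TensorProduct.tmul_smul]
      _ = ∑ j, (∑ i, M j i • ρ (t i)) ⊗ₜ[R] e j := by
          rw [Finset.sum_comm]
          refine Finset.sum_congr rfl fun j _ => ?_
          rw [TensorProduct.sum_tmul]
          refine Finset.sum_congr rfl fun i _ => ?_
          rw [TensorProduct.smul_tmul']
      _ = ∑ j, t j ⊗ₜ[R] e j := by
          refine Finset.sum_congr rfl fun j _ => ?_
          rw [hρt]
  have hcoeff : ρ ((minpoly K α).coeff 0) = (minpoly K α).coeff 0 :=
    aux_minpoly_coeff_zero_fix ρ G.toAddMonoidHom Gsmul Gmul Gone α hGα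
  have hτcoeff : τ ((minpoly K α).coeff 0) = (minpoly K α).coeff 0 := by
    conv_lhs => rw [← hcoeff]
    rw [hρ, RingEquiv.apply_symm_apply]
  have hσdet : MvPolynomial.aeval φM detA = detA := by
    apply IsFractionRing.injective (MvPolynomial (Fin n) R) K
    rw [← htau detA, hdetA, map_mul, map_pow, map_neg, map_one, hτcoeff, ← hdetA]
  -- conclusion for arbitrary T
  intro T _ _ x
  set b := Algebra.TensorProduct.basis T e with hb
  set c : Fin n → T := fun i => b.repr x i with hc
  have hbc : LinearMap.baseChange T f x
      = ∑ j, (∑ i, algebraMap R T (M j i) * c i) • b j := by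
    have hfb : ∀ i, LinearMap.baseChange T f (b i) = ∑ j, M j i • b j := by
      intro i
      rw [hb, Algebra.TensorProduct.basis_apply, LinearMap.baseChange_tmul, hfe,
        TensorProduct.tmul_sum]
      refine Finset.sum_congr rfl fun j _ => ?_
      rw [TensorProduct.tmul_smul, Algebra.TensorProduct.basis_apply]
    conv_lhs => rw [← b.sum_repr x, map_sum]
    calc ∑ i, LinearMap.baseChange T f (b.repr x i • b i)
        = ∑ i, ∑ j, (algebraMap R T (M j i) * c i) • b j := by
          refine Finset.sum_congr rfl fun i _ => ?_
          rw [map_smul, hfb, Finset.smul_sum]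
          refine Finset.sum_congr rfl fun j _ => ?_
          show (b.repr x) i • M j i • b j = (algebraMap R T (M j i) * (b.repr x) i) • b j
          rw [← algebraMap_smul T (M j i) (b j), smul_smul, mul_comm]
      _ = ∑ j, (∑ i, algebraMap R T (M j i) * c i) • b j := by
          rw [Finset.sum_comm]
          refine Finset.sum_congr rfl fun j _ => ?_
          rw [Finset.sum_smul]
  have hrepr : ∀ j, b.repr (LinearMap.baseChange T f x) j
      = ∑ i, algebraMap R T (M j i) * c i := by
    intro j
    rw [hbc]
    have := Module.Basis.repr_sum_self b (fun j => ∑ i, algebraMap R T (M j i) * c i)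
    rw [this]
  have hfun : (fun j => b.repr (LinearMap.baseChange T f x) j)
      = fun j => MvPolynomial.aeval c (φM j) := by
    funext j
    rw [hrepr]
    simp [hφM]
  show MvPolynomial.aeval (fun j => b.repr (LinearMap.baseChange T f x) j) detA
      = MvPolynomial.aeval (fun i => b.repr x i) detA
  rw [hfun, ← MvPolynomial.comp_aeval_apply, hσdet]
end

section
/- Let k be an infinite field and A a finite-dimensional associative unital k-algebra with basis e₁, …, eₙ, and let d be the degree of algebraicity of A, i.e. the degree of the minimal polynomial of the generic element α = t₁e₁ + ⋯ + tₙeₙ ∈ A ⊗_k k(t₁, …, tₙ) over k(t₁, …, tₙ). Then d = max over x ∈ A of deg(minpoly_k(x)): every x ∈ A has deg(minpoly_k(x)) ≤ d, and there exists x ∈ A with deg(minpoly_k(x)) = d. -/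
open scoped TensorProduct

universe u v w



open Polynomial Matrix

section Helpers

variable {F : Type*} [Field F]

/-- The first `m` powers of an integral element are linearly independent iff
`m ≤ deg(minpoly)`. -/
theorem li_pow_iff_aux {B : Type*} [Ring B] [Algebra F B] {x : B}
    (hx : IsIntegral F x) (m : ℕ) :
    LinearIndependent F (fun j : Fin m => x ^ (j : ℕ)) ↔ m ≤ (minpoly F x).natDegree := by
  constructor
  · intro h
    by_contra hm
    push_neg at hm
    have hsum : ∑ j : Fin m, (minpoly F x).coeff (j : ℕ) • x ^ (j : ℕ) = 0 := by
      rw [Fin.sum_univ_eq_sum_range (fun j => (minpoly F x).coeff j • x ^ j) m,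
        ← Polynomial.aeval_eq_sum_range' hm]
      exact minpoly.aeval F x
    have := Fintype.linearIndependent_iff.1 h _ hsum ⟨(minpoly F x).natDegree, hm⟩
    rw [(minpoly.monic hx).coeff_natDegree] at this
    exact one_ne_zero this
  · intro hm
    rw [Fintype.linearIndependent_iff]
    intro g hg j
    by_contra hgj
    set q : F[X] := ∑ j : Fin m, Polynomial.C (g j) * Polynomial.X ^ (j : ℕ) with hq
    have hqx : Polynomial.aeval x q = 0 := by
      rw [hq, map_sum]
      simpa [Algebra.smul_def] using hg
    have hqcoeff : ∀ i : Fin m, q.coeff (i : ℕ) = g i := by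
      intro i
      rw [hq, Polynomial.finset_sum_coeff]
      simp only [Polynomial.coeff_C_mul, Polynomial.coeff_X_pow, mul_ite, mul_one, mul_zero]
      simp only [Fin.val_eq_val]
      rw [Finset.sum_ite_eq]
      simp
    have hjm : (j:ℕ) < m := j.isLt
    have hq0 : q ≠ 0 := fun h => hgj (by rw [← hqcoeff j, h, Polynomial.coeff_zero])
    have hqdeg : q.natDegree < m := by
      have hle : q.natDegree ≤ m - 1 := by
        apply Polynomial.natDegree_sum_le_of_forall_le
        intro i _
        refine le_trans (Polynomial.natDegree_C_mul_le _ _) ?_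
        rw [Polynomial.natDegree_X_pow]
        omega
      omega
    have hmin := minpoly.degree_le_of_ne_zero F x hq0 hqx
    have := Polynomial.natDegree_le_natDegree hmin
    omega

theorem li_comp_equiv_iff_aux {V W : Type*} [AddCommGroup V] [AddCommGroup W]
    [Module F V] [Module F W] (E : V ≃ₗ[F] W) {ι : Type*} (v : ι → V) :
    LinearIndependent F (fun j => E (v j)) ↔ LinearIndependent F v := by
  constructor
  · intro h
    exact LinearIndependent.of_comp E.toLinearMap h
  · intro h
    exact h.map' E.toLinearMap E.ker

theorem li_iff_rows_aux {V : Type*} [AddCommGroup V] [Module F V] {n m : ℕ}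
    (b : Module.Basis (Fin n) F V) (v : Fin m → V) :
    LinearIndependent F v ↔ LinearIndependent F (fun j i => b.repr (v j) i) := by
  let E : V ≃ₗ[F] (Fin n → F) :=
    b.repr ≪≫ₗ (Finsupp.linearEquivFunOnFinite F F (Fin n))
  have hE : (fun j i => b.repr (v j) i) = fun j => E (v j) := by
    funext j i; rfl
  rw [hE, li_comp_equiv_iff_aux]

/-- Rows of a rectangular matrix over a field are linearly independent iff some maximal
square submatrix has nonzero determinant. -/
theorem li_rows_iff_det_aux {m n : ℕ} (M : Fin m → Fin n → F) :
    LinearIndependent F M ↔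
      ∃ g : Fin m → Fin n, Function.Injective g ∧
        (Matrix.of (fun i j => M i (g j))).det ≠ 0 := by
  classical
  constructor
  · intro h
    have hrank : (Matrix.of M).rank = m := by
      have h' : LinearIndependent F (fun i => (Matrix.of M) i) := h
      simpa using h'.rank_matrix
    have hspan : Submodule.span F (Set.range (Matrix.of M)ᵀ) = ⊤ := by
      apply Submodule.eq_top_of_finrank_eq
      change Module.finrank F (Submodule.span F (Set.range (Matrix.of M).col)) = _
      rw [← Matrix.rank_eq_finrank_span_cols, hrank,
        Module.finrank_fintype_fun_eq_card, Fintype.card_fin]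
    obtain ⟨bs, hbsub, hbspan, hbli⟩ := exists_linearIndependent F (Set.range (Matrix.of M)ᵀ)
    rw [hspan] at hbspan
    have hspan' : Submodule.span F (Set.range ((↑) : bs → (Fin m → F))) = ⊤ := by
      rw [Subtype.range_coe]; exact hbspan
    let B : Module.Basis bs F (Fin m → F) := Module.Basis.mk hbli (by rw [hspan'])
    haveI : Fintype bs := FiniteDimensional.fintypeBasisIndex B
    have hcard : Fintype.card bs = m := by
      have h1 := Module.finrank_eq_card_basis B
      rw [Module.finrank_fintype_fun_eq_card, Fintype.card_fin] at h1
      omega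
    let eqv : Fin m ≃ bs := (Fintype.equivFinOfCardEq hcard).symm
    have hmem : ∀ y : bs, ∃ j : Fin n, (Matrix.of M)ᵀ j = ↑y := fun y => hbsub y.2
    choose idx hidx using hmem
    refine ⟨fun j => idx (eqv j), ?_, ?_⟩
    · intro j₁ j₂ hj
      simp only at hj
      have h1 := hidx (eqv j₁)
      have h2 := hidx (eqv j₂)
      rw [hj] at h1
      exact eqv.injective (Subtype.coe_injective (h1.symm.trans h2))
    · set N : Matrix (Fin m) (Fin m) F := Matrix.of fun i j => M i (idx (eqv j)) with hN
      have hcols : (fun j => Nᵀ j) = (fun y : bs => (y : Fin m → F)) ∘ eqv := by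
        funext j
        have := hidx (eqv j)
        funext i
        exact congrFun this i
      have hcolLI : LinearIndependent F (fun j => Nᵀ j) := by
        rw [hcols]
        exact hbli.comp eqv eqv.injective
      have hunit : IsUnit N := Matrix.linearIndependent_cols_iff_isUnit.1 hcolLI
      exact isUnit_iff_ne_zero.1 ((Matrix.isUnit_iff_isUnit_det N).1 hunit)
  · rintro ⟨g, hg, hdet⟩
    have hunit : IsUnit (Matrix.of fun i j => M i (g j)) :=
      (Matrix.isUnit_iff_isUnit_det _).2 (isUnit_iff_ne_zero.2 hdet)
    have hrows : LinearIndependent F (fun i => (Matrix.of fun i j => M i (g j)) i) :=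
      Matrix.linearIndependent_rows_iff_isUnit.2 hunit
    have hcomp : (fun i => (Matrix.of fun i j => M i (g j)) i)
        = (LinearMap.funLeft F F g) ∘ M := rfl
    exact LinearIndependent.of_comp (LinearMap.funLeft F F g) (hcomp ▸ hrows)

end Helpers

/-- Over an infinite field `k`, the degree of algebraicity `d` of a finite-dimensional
`k`-algebra `A` (the degree of the minimal polynomial of the generic element) is the
maximum of the degrees of minimal polynomials of elements of `A`: every `x ∈ A`
satisfies `deg(minpoly k x) ≤ d`, and some `x ∈ A` attains `d`. -/
theorem deg_of_algebraicity_eq_sup_deg_minpoly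
    {k : Type u} [Field k] [Infinite k] {n : ℕ}
    {A : Type v} [Ring A] [Algebra k A] (e : Module.Basis (Fin n) k A)
    {K : Type w} [Field K] [Algebra (MvPolynomial (Fin n) k) K]
    [IsFractionRing (MvPolynomial (Fin n) k) K]
    [Algebra k K] [IsScalarTower k (MvPolynomial (Fin n) k) K]
    (α : K ⊗[k] A)
    (hα : α = ∑ i, algebraMap (MvPolynomial (Fin n) k) K (MvPolynomial.X i) ⊗ₜ[k] e i)
    (d : ℕ) (hd : d = (minpoly K α).natDegree) :
    (∀ x : A, (minpoly k x).natDegree ≤ d)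
    ∧ ∃ x : A, (minpoly k x).natDegree = d := by
  classical
  haveI : Module.Finite k A := Module.Finite.of_basis e
  let bK : Module.Basis (Fin n) K (K ⊗[k] A) := Algebra.TensorProduct.basis K e
  let bR : Module.Basis (Fin n) (MvPolynomial (Fin n) k)
      ((MvPolynomial (Fin n) k) ⊗[k] A) := Algebra.TensorProduct.basis _ e
  haveI : Module.Finite K (K ⊗[k] A) := Module.Finite.of_basis bK
  have hαint : IsIntegral K α := IsIntegral.of_finite K α
  let β : (MvPolynomial (Fin n) k) ⊗[k] A := ∑ i, MvPolynomial.X i ⊗ₜ[k] e i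
  let Φ : (MvPolynomial (Fin n) k) ⊗[k] A →ₐ[k] K ⊗[k] A :=
    Algebra.TensorProduct.map (IsScalarTower.toAlgHom k (MvPolynomial (Fin n) k) K)
      (AlgHom.id k A)
  have hΦβ : Φ β = α := by
    rw [hα]
    simp [β, Φ, map_sum, Algebra.TensorProduct.map_tmul]
  -- coordinate polynomials of the powers of β
  let r : ℕ → Fin n → MvPolynomial (Fin n) k := fun j i => bR.repr (β ^ j) i
  have hΦrepr : ∀ (z : (MvPolynomial (Fin n) k) ⊗[k] A) (i : Fin n),
      bK.repr (Φ z) i = algebraMap (MvPolynomial (Fin n) k) K (bR.repr z i) := by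
    intro z
    induction z using TensorProduct.induction_on with
    | zero => intro i; simp
    | tmul p a =>
      intro i
      simp only [Φ, Algebra.TensorProduct.map_tmul, AlgHom.coe_id, id_eq,
        IsScalarTower.coe_toAlgHom']
      simp only [bK, bR, Algebra.TensorProduct.basis_repr_tmul]
      simp only [Finsupp.smul_apply, Finsupp.mapRange_apply, smul_eq_mul, _root_.map_mul]
      rw [IsScalarTower.algebraMap_apply k (MvPolynomial (Fin n) k) K]
    | add x y hx hy =>
      intro i
      simp only [map_add, Finsupp.add_apply, hx, hy]
  let Ψ : (Fin n → k) → ((MvPolynomial (Fin n) k) ⊗[k] A →ₐ[k] A) := fun c =>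
    (Algebra.TensorProduct.lid k A).toAlgHom.comp
      (Algebra.TensorProduct.map (MvPolynomial.aeval c) (AlgHom.id k A))
  have hΨrepr : ∀ (c : Fin n → k) (z : (MvPolynomial (Fin n) k) ⊗[k] A) (i : Fin n),
      e.repr (Ψ c z) i = MvPolynomial.aeval c (bR.repr z i) := by
    intro c z
    induction z using TensorProduct.induction_on with
    | zero => intro i; simp [Ψ]
    | tmul p a =>
      intro i
      simp only [Ψ, AlgHom.coe_comp, Function.comp_apply, Algebra.TensorProduct.map_tmul,
        AlgHom.coe_id, id_eq, AlgEquiv.toAlgHom_eq_coe, AlgHom.coe_coe,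
        Algebra.TensorProduct.lid_tmul]
      erw [Algebra.TensorProduct.lid_tmul]
      simp only [bR, Algebra.TensorProduct.basis_repr_tmul]
      simp only [_root_.map_smul, Finsupp.smul_apply, smul_eq_mul, Finsupp.mapRange_apply,
        _root_.map_mul, MvPolynomial.algebraMap_eq, MvPolynomial.aeval_C, Algebra.algebraMap_self,
        RingHom.id_apply]
    | add x y hx hy =>
      intro i
      simp only [map_add, Finsupp.add_apply, hx, hy]
  have hΨβ : ∀ c : Fin n → k, Ψ c β = ∑ i, c i • e i := by
    intro c
    simp [Ψ, β, map_sum, Algebra.TensorProduct.map_tmul, Algebra.TensorProduct.lid_tmul]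
  have hrowK : ∀ (j : ℕ) (i : Fin n),
      bK.repr (α ^ j) i = algebraMap (MvPolynomial (Fin n) k) K (r j i) := by
    intro j i
    rw [← hΦβ, ← map_pow]
    exact hΦrepr _ i
  have hrowk : ∀ (c : Fin n → k) (j : ℕ) (i : Fin n),
      e.repr ((Ψ c β) ^ j) i = MvPolynomial.aeval c (r j i) := by
    intro c j i
    rw [← map_pow]
    exact hΨrepr c _ i
  -- the d+1 powers of α are K-linearly dependent
  have hKdep : ¬ LinearIndependent K (fun j : Fin (d+1) => α ^ (j : ℕ)) := by
    intro h
    have := (li_pow_iff_aux hαint (d+1)).1 h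
    omega
  -- hence every maximal minor of the (d+1) × n coordinate matrix over R vanishes
  have hdetzero : ∀ g : Fin (d+1) → Fin n, Function.Injective g →
      (Matrix.of fun j j' : Fin (d+1) => r (j : ℕ) (g j')).det = 0 := by
    intro g hginj
    by_contra hne
    apply hKdep
    rw [li_iff_rows_aux bK]
    have hre : (fun (j : Fin (d+1)) i => bK.repr (α ^ (j : ℕ)) i)
        = fun (j : Fin (d+1)) i => algebraMap (MvPolynomial (Fin n) k) K (r (j : ℕ) i) := by
      funext j i; exact hrowK _ i
    rw [hre]
    apply (li_rows_iff_det_aux _).2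
    refine ⟨g, hginj, ?_⟩
    have hmap : (Matrix.of fun j j' : Fin (d+1) =>
        algebraMap (MvPolynomial (Fin n) k) K (r (j : ℕ) (g j')))
        = (Matrix.of fun j j' : Fin (d+1) => r (j : ℕ) (g j')).map
            (algebraMap (MvPolynomial (Fin n) k) K) := rfl
    rw [hmap, ← RingHom.mapMatrix_apply, ← RingHom.map_det]
    exact fun h0 => hne ((map_eq_zero_iff _
      (IsFractionRing.injective (MvPolynomial (Fin n) k) K)).1 h0)
  -- Part 1
  have part1 : ∀ x : A, (minpoly k x).natDegree ≤ d := by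
    intro x
    have hxint : IsIntegral k x := IsIntegral.of_finite k x
    by_contra hgt
    push_neg at hgt
    have hLI : LinearIndependent k (fun j : Fin (d+1) => x ^ (j : ℕ)) :=
      (li_pow_iff_aux hxint (d+1)).2 hgt
    set c : Fin n → k := fun i => e.repr x i with hc
    have hxc : Ψ c β = x := by rw [hΨβ]; exact e.sum_repr x
    rw [← hxc] at hLI
    rw [li_iff_rows_aux e] at hLI
    have hre : (fun (j : Fin (d+1)) i => e.repr ((Ψ c β) ^ (j : ℕ)) i)
        = fun (j : Fin (d+1)) i => MvPolynomial.aeval c (r (j : ℕ) i) := by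
      funext j i; exact hrowk c _ i
    rw [hre] at hLI
    obtain ⟨g, hginj, hgdet⟩ := (li_rows_iff_det_aux _).1 hLI
    apply hgdet
    have hmap : (Matrix.of fun j j' : Fin (d+1) =>
        MvPolynomial.aeval c (r (j : ℕ) (g j')))
        = (Matrix.of fun j j' : Fin (d+1) => r (j : ℕ) (g j')).map
            (MvPolynomial.aeval c).toRingHom := rfl
    rw [hmap, ← RingHom.mapMatrix_apply, ← RingHom.map_det, hdetzero g hginj, map_zero]
  refine ⟨part1, ?_⟩
  -- Part 2
  have hKLI : LinearIndependent K (fun j : Fin d => α ^ (j : ℕ)) :=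
    (li_pow_iff_aux hαint d).2 (le_of_eq hd)
  rw [li_iff_rows_aux bK] at hKLI
  have hre : (fun (j : Fin d) i => bK.repr (α ^ (j : ℕ)) i)
      = fun (j : Fin d) i => algebraMap (MvPolynomial (Fin n) k) K (r (j : ℕ) i) := by
    funext j i; exact hrowK _ i
  rw [hre] at hKLI
  obtain ⟨g, hginj, hgdet⟩ := (li_rows_iff_det_aux _).1 hKLI
  set MR : Matrix (Fin d) (Fin d) (MvPolynomial (Fin n) k) :=
    Matrix.of fun j j' : Fin d => r (j : ℕ) (g j') with hMRdef
  have hMR : MR.det ≠ 0 := by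
    intro h0
    apply hgdet
    have hmap : (Matrix.of fun j j' : Fin d =>
        algebraMap (MvPolynomial (Fin n) k) K (r (j : ℕ) (g j')))
        = MR.map (algebraMap (MvPolynomial (Fin n) k) K) := rfl
    rw [hmap, ← RingHom.mapMatrix_apply, ← RingHom.map_det, h0, map_zero]
  have hev : ∃ c : Fin n → k, MvPolynomial.eval c MR.det ≠ 0 := by
    by_contra hall
    push_neg at hall
    exact hMR (MvPolynomial.funext fun c => by rw [hall c, map_zero])
  obtain ⟨c, hcne⟩ := hev
  refine ⟨Ψ c β, le_antisymm (part1 _) ?_⟩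
  have hxint : IsIntegral k (Ψ c β) := IsIntegral.of_finite k _
  apply (li_pow_iff_aux hxint d).1
  rw [li_iff_rows_aux e]
  have hre2 : (fun (j : Fin d) i => e.repr ((Ψ c β) ^ (j : ℕ)) i)
      = fun (j : Fin d) i => MvPolynomial.aeval c (r (j : ℕ) i) := by
    funext j i; exact hrowk c _ i
  rw [hre2]
  apply (li_rows_iff_det_aux _).2
  refine ⟨g, hginj, ?_⟩
  have hmap : (Matrix.of fun j j' : Fin d => MvPolynomial.aeval c (r (j : ℕ) (g j')))
      = MR.map (MvPolynomial.aeval c).toRingHom := rfl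
  rw [hmap, ← RingHom.mapMatrix_apply, ← RingHom.map_det]
  have hco : (MvPolynomial.aeval c).toRingHom = MvPolynomial.eval c :=
    MvPolynomial.coe_aeval_eq_eval c
  rw [hco]
  exact hcne
end

section
/- Let k be an infinite field and A a finite-dimensional associative unital k-algebra of dimension n with basis e₁, …, eₙ, and let d be the degree of algebraicity of A, i.e. the degree of the minimal polynomial of the generic element α = t₁e₁ + ⋯ + tₙeₙ ∈ A ⊗_k k(t₁, …, tₙ) over k(t₁, …, tₙ). Then d = n if and only if A is monogenic, i.e. there exists x ∈ A such that the k-subalgebra generated by x is all of A. -/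
open scoped TensorProduct
open Polynomial

universe u v w

section Aux

variable {k : Type u} [Field k] {A : Type v} [Ring A] [Algebra k A]

lemma baseChange_repr_map {ι : Type*} [Fintype ι] (e : Module.Basis ι k A)
    {S : Type*} [CommRing S] [Algebra k S] {T : Type*} [CommRing T] [Algebra k T]
    (f : S →ₐ[k] T) (y : S ⊗[k] A) (j : ι) :
    (e.baseChange T).repr ((Algebra.TensorProduct.map f (AlgHom.id k A)) y) j
      = f ((e.baseChange S).repr y j) := by
  induction y using TensorProduct.induction_on with
  | zero => simp
  | tmul s a => simp [Algebra.TensorProduct.map_tmul]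
  | add y z hy hz => simp [hy, hz]

lemma repr_lid {ι : Type*} [Fintype ι] (e : Module.Basis ι k A) (y : k ⊗[k] A) (j : ι) :
    e.repr ((Algebra.TensorProduct.lid k A) y) j = (e.baseChange k).repr y j := by
  induction y using TensorProduct.induction_on with
  | zero => simp
  | tmul s a => simp [Algebra.TensorProduct.lid_tmul, smul_eq_mul, mul_comm]
  | add y z hy hz => simp [hy, hz]

lemma linearIndependent_pow_iff {K : Type*} {B : Type*} [Field K] [Ring B] [Nontrivial B]
    [Algebra K B] {x : B} (hx : IsIntegral K x) (m : ℕ) :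
    (LinearIndependent K fun j : Fin m => x ^ (j : ℕ)) ↔ m ≤ (minpoly K x).natDegree := by
  constructor
  · intro h
    by_contra hlt
    push_neg at hlt
    set p := minpoly K x with hp
    have hsum : ∑ j : Fin m, p.coeff (j : ℕ) • x ^ (j : ℕ) = 0 := by
      rw [Fin.sum_univ_eq_sum_range (fun j => p.coeff j • x ^ j) m,
        ← Polynomial.aeval_eq_sum_range' hlt x, minpoly.aeval]
    have h0 := Fintype.linearIndependent_iff.mp h (fun j => p.coeff (j : ℕ)) hsum
      ⟨p.natDegree, hlt⟩
    simp [hp, (minpoly.monic hx).coeff_natDegree] at h0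
  · intro h
    have h2 := (linearIndependent_pow (K := K) x).comp (Fin.castLE h)
      (Fin.castLE_injective h)
    exact h2

lemma le_natDegree_of_adjoin_eq_top {K : Type*} {B : Type*} [Field K] [Ring B] [Algebra K B]
    [Module.Finite K B] {x : B} (hx : Algebra.adjoin K {x} = ⊤) :
    Module.finrank K B ≤ (minpoly K x).natDegree := by
  classical
  have hint : IsIntegral K x := IsIntegral.of_finite K x
  have hspan := Submodule.span_range_natDegree_eq_adjoin (minpoly.monic hint) (minpoly.aeval K x)
  rw [hx, Algebra.top_toSubmodule] at hspan
  calc Module.finrank K B = Module.finrank K (⊤ : Submodule K B) :=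
        (finrank_top K B).symm
    _ = Module.finrank K (Submodule.span K
          ((Finset.image (x ^ ·) (Finset.range (minpoly K x).natDegree) : Finset B) : Set B)) := by
        rw [hspan]
    _ ≤ (Finset.image (x ^ ·) (Finset.range (minpoly K x).natDegree)).card :=
        finrank_span_finset_le_card _
    _ ≤ (Finset.range (minpoly K x).natDegree).card := Finset.card_image_le
    _ = (minpoly K x).natDegree := Finset.card_range _

end Aux

set_option maxHeartbeats 1000000 in
/-- Over an infinite field `k`, a finite-dimensional `k`-algebra `A` of dimension `n`
has degree of algebraicity `d = n` if and only if `A` is monogenic, i.e. generated as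
a `k`-algebra by a single element. -/
theorem deg_of_algebraicity_eq_dim_iff_monogenic
    {k : Type u} [Field k] [Infinite k] {n : ℕ}
    {A : Type v} [Ring A] [Algebra k A] (e : Module.Basis (Fin n) k A)
    {K : Type w} [Field K] [Algebra (MvPolynomial (Fin n) k) K]
    [IsFractionRing (MvPolynomial (Fin n) k) K]
    [Algebra k K] [IsScalarTower k (MvPolynomial (Fin n) k) K]
    (α : K ⊗[k] A)
    (hα : α = ∑ i, algebraMap (MvPolynomial (Fin n) k) K (MvPolynomial.X i) ⊗ₜ[k] e i)
    (d : ℕ) (hd : d = (minpoly K α).natDegree) :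
    d = n ↔ ∃ x : A, Algebra.adjoin k {x} = ⊤ := by
  classical
  rcases Nat.eq_zero_or_pos n with hn | hn
  · subst hn
    haveI : Subsingleton A := e.repr.toEquiv.subsingleton
    haveI : Subsingleton (K ⊗[k] A) := (e.baseChange K).repr.toEquiv.subsingleton
    have hd0 : d = 0 := by
      rw [hd]
      have h1 : (minpoly K α).degree ≤ (1 : K[X]).degree :=
        minpoly.min K α monic_one (Subsingleton.elim _ _)
      have := Polynomial.natDegree_le_natDegree h1
      simpa using this
    simp only [hd0, true_iff, eq_self_iff_true]
    refine ⟨0, eq_top_iff.mpr fun y _ => ?_⟩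
    rw [Subsingleton.elim y 0]; exact zero_mem _
  · haveI : FiniteDimensional k A := Module.Finite.of_basis e
    haveI hne : Nonempty (Fin n) := Fin.pos_iff_nonempty.mp hn
    haveI : Nontrivial A := nontrivial_of_ne _ _ (e.ne_zero ⟨0, hn⟩)
    haveI : FiniteDimensional K (K ⊗[k] A) := Module.Finite.of_basis (e.baseChange K)
    haveI : Nontrivial (K ⊗[k] A) := nontrivial_of_ne _ _ ((e.baseChange K).ne_zero ⟨0, hn⟩)
    have hfinrankK : Module.finrank K (K ⊗[k] A) = n := by
      rw [Module.finrank_eq_card_basis (e.baseChange K), Fintype.card_fin]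
    have hfinrank : Module.finrank k A = n := by
      rw [Module.finrank_eq_card_basis e, Fintype.card_fin]
    set β : MvPolynomial (Fin n) k ⊗[k] A := ∑ i, MvPolynomial.X i ⊗ₜ[k] e i with hβ
    set M : Matrix (Fin n) (Fin n) (MvPolynomial (Fin n) k) :=
      Matrix.of (fun p i => (e.baseChange (MvPolynomial (Fin n) k)).repr (β ^ (p : ℕ)) i) with hM
    -- K side
    set fK : MvPolynomial (Fin n) k →ₐ[k] K := IsScalarTower.toAlgHom k (MvPolynomial (Fin n) k) K with hfK
    have hFKβ : (Algebra.TensorProduct.map fK (AlgHom.id k A)) β = α := by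
      rw [hα, hβ, map_sum]
      refine Finset.sum_congr rfl fun i _ => ?_
      simp [Algebra.TensorProduct.map_tmul, hfK, IsScalarTower.coe_toAlgHom']
    have hreprK : ∀ (p i : Fin n),
        (e.baseChange K).repr (α ^ (p : ℕ)) i = algebraMap (MvPolynomial (Fin n) k) K (M p i) := by
      intro p i
      rw [hM, ← hFKβ, ← map_pow]
      exact baseChange_repr_map e fK _ i
    have hdet_iff : d = n ↔ M.det ≠ 0 := by
      have hint : IsIntegral K α := IsIntegral.of_finite K α
      have hle : d ≤ n := by
        rw [hd, ← hfinrankK]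
        simpa using (linearIndependent_pow (K := K) α).fintype_card_le_finrank
      have hiff : (LinearIndependent K fun p : Fin n => α ^ (p : ℕ)) ↔ n ≤ d := by
        rw [hd]; exact linearIndependent_pow_iff hint n
      have hdetK : (e.baseChange K).det (fun p : Fin n => α ^ (p : ℕ))
          = algebraMap (MvPolynomial (Fin n) k) K M.det := by
        rw [Module.Basis.det_apply]
        have hMeq : (e.baseChange K).toMatrix (fun p : Fin n => α ^ (p : ℕ))
            = ((algebraMap (MvPolynomial (Fin n) k) K).mapMatrix M).transpose := by
          ext i p
          simp [Module.Basis.toMatrix_apply, hreprK]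
        rw [hMeq, Matrix.det_transpose, ← RingHom.map_det]
      constructor
      · intro hdn
        have hind : LinearIndependent K fun p : Fin n => α ^ (p : ℕ) :=
          hiff.mpr (le_of_eq hdn.symm)
        have hspan := hind.span_eq_top_of_card_eq_finrank
          (by rw [Fintype.card_fin, hfinrankK])
        have hunit : IsUnit ((e.baseChange K).det fun p : Fin n => α ^ (p : ℕ)) :=
          (Module.Basis.is_basis_iff_det _).mp ⟨hind, hspan⟩
        rw [hdetK, isUnit_iff_ne_zero] at hunit
        intro h0
        rw [h0, map_zero] at hunit
        exact hunit rfl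
      · intro hMdet
        have hunit : IsUnit ((e.baseChange K).det fun p : Fin n => α ^ (p : ℕ)) := by
          rw [hdetK, isUnit_iff_ne_zero]
          intro h0
          exact hMdet (IsFractionRing.injective (MvPolynomial (Fin n) k) K (by rw [h0, map_zero]))
        have hb := (Module.Basis.is_basis_iff_det _).mpr hunit
        exact le_antisymm hle (hiff.mp hb.1)
    -- k side
    have hreprk : ∀ (x : A) (p i : Fin n),
        e.repr (x ^ (p : ℕ)) i = MvPolynomial.eval (fun j => e.repr x j) (M p i) := by
      intro x p i
      set c : Fin n → k := fun j => e.repr x j with hc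
      set fc : MvPolynomial (Fin n) k →ₐ[k] k := MvPolynomial.aeval c with hfc
      have hGβ : (Algebra.TensorProduct.lid k A)
          ((Algebra.TensorProduct.map fc (AlgHom.id k A)) β) = x := by
        rw [hβ, map_sum, map_sum]
        have : ∀ i : Fin n, (Algebra.TensorProduct.lid k A)
            ((Algebra.TensorProduct.map fc (AlgHom.id k A)) (MvPolynomial.X i ⊗ₜ[k] e i))
            = c i • e i := by
          intro i
          simp [Algebra.TensorProduct.map_tmul, hfc, MvPolynomial.aeval_X]
        rw [Finset.sum_congr rfl fun i _ => this i]
        exact e.sum_repr x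
      have hGβp : (Algebra.TensorProduct.lid k A)
          ((Algebra.TensorProduct.map fc (AlgHom.id k A)) (β ^ (p : ℕ))) = x ^ (p : ℕ) := by
        rw [map_pow, map_pow, hGβ]
      calc e.repr (x ^ (p : ℕ)) i
          = e.repr ((Algebra.TensorProduct.lid k A)
              ((Algebra.TensorProduct.map fc (AlgHom.id k A)) (β ^ (p : ℕ)))) i := by
            rw [hGβp]
        _ = (e.baseChange k).repr
              ((Algebra.TensorProduct.map fc (AlgHom.id k A)) (β ^ (p : ℕ))) i :=
            repr_lid e _ i
        _ = fc (M p i) := by rw [hM]; exact baseChange_repr_map e fc _ i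
        _ = MvPolynomial.eval c (M p i) := by
            rw [hfc, ← MvPolynomial.coe_aeval_eq_eval]; rfl
    have hdetk : ∀ x : A, e.det (fun p : Fin n => x ^ (p : ℕ))
        = MvPolynomial.eval (fun j => e.repr x j) M.det := by
      intro x
      rw [Module.Basis.det_apply]
      have hMeq : e.toMatrix (fun p : Fin n => x ^ (p : ℕ))
          = ((MvPolynomial.eval fun j => e.repr x j).mapMatrix M).transpose := by
        ext i p
        simp [Module.Basis.toMatrix_apply, hreprk]
      rw [hMeq, Matrix.det_transpose, ← RingHom.map_det]
    have hmono_iff : (∃ x : A, Algebra.adjoin k {x} = ⊤) ↔ M.det ≠ 0 := by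
      constructor
      · rintro ⟨x, hx⟩
        have hint : IsIntegral k x := IsIntegral.of_finite k x
        have hge : n ≤ (minpoly k x).natDegree := by
          rw [← hfinrank]; exact le_natDegree_of_adjoin_eq_top hx
        have hind : LinearIndependent k fun p : Fin n => x ^ (p : ℕ) :=
          (linearIndependent_pow_iff hint n).mpr hge
        have hspan := hind.span_eq_top_of_card_eq_finrank
          (by rw [Fintype.card_fin, hfinrank])
        have hunit := (Module.Basis.is_basis_iff_det e).mp ⟨hind, hspan⟩
        rw [hdetk x, isUnit_iff_ne_zero] at hunit
        intro h0
        rw [h0, map_zero] at hunit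
        exact hunit rfl
      · intro hMdet
        obtain ⟨c, hc⟩ : ∃ c : Fin n → k, MvPolynomial.eval c M.det ≠ 0 := by
          by_contra hall
          push_neg at hall
          exact hMdet (MvPolynomial.funext fun c => by simp [hall c])
        refine ⟨∑ i, c i • e i, ?_⟩
        set x : A := ∑ i, c i • e i with hx
        have hcx : (fun j => (e.repr x j : k)) = c := by
          funext j
          rw [hx]
          exact congrFun (e.repr_sum_self c) j
        have hunit : IsUnit (e.det fun p : Fin n => x ^ (p : ℕ)) := by
          rw [hdetk x, hcx]
          exact isUnit_iff_ne_zero.mpr hc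
        obtain ⟨hind, hspan⟩ := (Module.Basis.is_basis_iff_det e).mpr hunit
        rw [eq_top_iff]
        intro y _
        have hy : y ∈ Submodule.span k (Set.range fun p : Fin n => x ^ (p : ℕ)) := by
          rw [hspan]; trivial
        rw [← Subalgebra.mem_toSubmodule]
        refine Submodule.span_le.mpr ?_ hy
        rintro z ⟨p, rfl⟩
        show x ^ (p : ℕ) ∈ Subalgebra.toSubmodule (Algebra.adjoin k {x})
        rw [Subalgebra.mem_toSubmodule]
        exact Subalgebra.pow_mem (Algebra.adjoin k {x}) (Algebra.subset_adjoin rfl) _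
    exact hdet_iff.trans hmono_iff.symm
end

section
/- Let k be any field and A a finite-dimensional associative unital k-algebra of dimension n with basis e₁, …, eₙ. If the degree of algebraicity of A equals n, i.e. the minimal polynomial of the generic element α = t₁e₁ + ⋯ + tₙeₙ ∈ A ⊗_k k(t₁, …, tₙ) over k(t₁, …, tₙ) has degree n, then A is commutative. -/
open scoped TensorProduct

universe u v w

/-- Over any field `k`, if the degree of algebraicity of an `n`-dimensional `k`-algebra
`A` equals `n` (i.e. the minimal polynomial of the generic element has degree `n`),
then `A` is commutative. -/
theorem commutative_of_deg_of_algebraicity_eq_dim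
    {k : Type u} [Field k] {n : ℕ}
    {A : Type v} [Ring A] [Algebra k A] (e : Module.Basis (Fin n) k A)
    {K : Type w} [Field K] [Algebra (MvPolynomial (Fin n) k) K]
    [IsFractionRing (MvPolynomial (Fin n) k) K]
    [Algebra k K] [IsScalarTower k (MvPolynomial (Fin n) k) K]
    (α : K ⊗[k] A)
    (hα : α = ∑ i, algebraMap (MvPolynomial (Fin n) k) K (MvPolynomial.X i) ⊗ₜ[k] e i)
    (hd : (minpoly K α).natDegree = n) :
    ∀ a b : A, a * b = b * a := by
  intro a b
  rcases Nat.eq_zero_or_pos n with hn | hn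
  · subst hn
    haveI : Subsingleton (Fin 0 →₀ k) := inferInstance
    haveI : Subsingleton A := e.repr.toEquiv.subsingleton
    exact Subsingleton.elim _ _
  haveI : Nonempty (Fin n) := ⟨⟨0, hn⟩⟩
  -- base-changed basis of K ⊗[k] A over K
  have eK : Module.Basis (Fin n) K (K ⊗[k] A) := e.baseChange K
  have hfin : Module.Finite K (K ⊗[k] A) := Module.Finite.of_basis eK
  have hrank : Module.finrank K (K ⊗[k] A) = n := Module.finrank_eq_card_basis eK |>.trans (by simp)
  -- the powers of α up to n-1 are linearly independent
  have li0 : LinearIndependent K fun i : Fin (minpoly K α).natDegree => α ^ (i : ℕ) :=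
    linearIndependent_pow α
  rw [hd] at li0
  -- since their number equals the dimension, they form a basis
  have hcard : Fintype.card (Fin n) = Module.finrank K (K ⊗[k] A) := by simp [hrank]
  let bpow : Module.Basis (Fin n) K (K ⊗[k] A) :=
    basisOfLinearIndependentOfCardEqFinrank li0 hcard
  have hbpow : ∀ i, bpow i = α ^ (i : ℕ) := fun i =>
    congrFun (coe_basisOfLinearIndependentOfCardEqFinrank li0 hcard) i
  -- hence every element lies in the (commutative) subalgebra generated by α
  have hmem : ∀ x : K ⊗[k] A, x ∈ Algebra.adjoin K ({α} : Set (K ⊗[k] A)) := by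
    intro x
    have hx : x ∈ Submodule.span K (Set.range bpow) := by
      rw [bpow.span_eq]; trivial
    have hle : Submodule.span K (Set.range bpow) ≤
        Subalgebra.toSubmodule (Algebra.adjoin K ({α} : Set (K ⊗[k] A))) := by
      rw [Submodule.span_le]
      rintro _ ⟨i, rfl⟩
      rw [hbpow]
      exact pow_mem (Algebra.self_mem_adjoin_singleton K α) _
    exact hle hx
  have hcomm : ∀ x y : K ⊗[k] A, Commute x y := by
    intro x y
    exact Algebra.commute_of_mem_adjoin_singleton_of_commute (hmem y)
      (Algebra.commute_of_mem_adjoin_self (hmem x)).symm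
  -- transfer commutativity back to A using injectivity of a ↦ 1 ⊗ₜ a
  have key : (1 : K) ⊗ₜ[k] (a * b) = (1 : K) ⊗ₜ[k] (b * a) := by
    have h := (hcomm ((1 : K) ⊗ₜ[k] a) ((1 : K) ⊗ₜ[k] b)).eq
    rwa [Algebra.TensorProduct.tmul_mul_tmul, Algebra.TensorProduct.tmul_mul_tmul,
      one_mul] at h
  have hrepr : ∀ i, e.repr (a * b) i = e.repr (b * a) i := by
    intro i
    have h1 := congrArg (fun z => (e.baseChange K).repr z i) key
    simp only [Module.Basis.baseChange_repr_tmul] at h1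
    have h2 : algebraMap k K (e.repr (a * b) i) = algebraMap k K (e.repr (b * a) i) := by
      simpa [Algebra.smul_def, mul_one] using h1
    exact (algebraMap k K).injective h2
  exact e.repr.injective (Finsupp.ext hrepr)
end

section
/- Let R be a commutative ring, e, f, h, i ∈ R, and let B be an associative unital R-algebra containing elements x, y satisfying the multiplication table x² = −f·i·1 + (f+i)·x, x·y = −e·f·1 + e·x + f·y, y·x = −h·i·1 + h·x + i·y, y² = −e·h·1 + (e+h)·y. Then for all r, s, t ∈ R, the element a = r·1 + s·x + t·y satisfies (a − (r + i·s + e·t)·1) · (a − (r + f·s + h·t)·1) = 0. (Thus the generic element of such a 3-dimensional algebra of degree of algebraicity 2 has minimal polynomial (T − (r+is+et))(T − (r+fs+ht)) and determinant (r+is+et)(r+fs+ht).) -/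
universe u v

/-- In any associative unital `R`-algebra `B` containing elements `x`, `y` satisfying
the multiplication table of the component `Alg_{3,2}` of three-dimensional algebras of
degree of algebraicity `2` (with structure constants `e`, `f`, `h`, `i`), the element
`a = r·1 + s·x + t·y` satisfies
`(a − (r + i·s + e·t)·1) · (a − (r + f·s + h·t)·1) = 0`. -/
theorem alg32_generic_element_quadratic_relation
    {R : Type u} [CommRing R] {B : Type v} [Ring B] [Algebra R B]
    (e f h i : R) (x y : B)
    (hx2 : x * x = algebraMap R B (-(f * i)) + (f + i) • x)
    (hxy : x * y = algebraMap R B (-(e * f)) + e • x + f • y)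
    (hyx : y * x = algebraMap R B (-(h * i)) + h • x + i • y)
    (hy2 : y * y = algebraMap R B (-(e * h)) + (e + h) • y) :
    ∀ r s t : R,
      ((algebraMap R B r + s • x + t • y) - algebraMap R B (r + i * s + e * t))
        * ((algebraMap R B r + s • x + t • y) - algebraMap R B (r + f * s + h * t))
      = 0 := by
  intro r s t
  simp only [Algebra.algebraMap_eq_smul_one, map_neg, map_mul, map_add] at *
  have key : (s • x + t • y - (i*s + e*t) • (1:B)) * (s • x + t • y - (f*s + h*t) • (1:B)) = 0 := by
    simp only [sub_mul, mul_sub, add_mul, mul_add, smul_mul_smul_comm, smul_mul_assoc,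
      mul_smul_comm, one_mul, mul_one, hx2, hxy, hyx, hy2]
    module
  simp only [smul_mul_smul_comm, mul_one]
  have e1 : r • (1:B) + s • x + t • y - (r • (1:B) + (i*s) • (1:B) + (e*t) • (1:B))
      = s • x + t • y - (i*s + e*t) • (1:B) := by module
  have e2 : r • (1:B) + s • x + t • y - (r • (1:B) + (f*s) • (1:B) + (h*t) • (1:B))
      = s • x + t • y - (f*s + h*t) • (1:B) := by module
  rw [e1, e2, key]
end

section
/- Let k be a field, and let a, b, c, d, e, f, g, h, i, j, l, m ∈ k (writing m for the structure constant called k in the paper). Define a bilinear multiplication on the free module k³ with basis 1, x, y by declaring 1 to be a two-sided unit and x² = a + b·x + c·y, x·y = d + e·x + f·y, y·x = g + h·x + i·y, y² = j + m·x + l·y. Then this multiplication is associative if and only if the following twelve equations hold: a = f(f−b) + c(e−l), d = c·m − e·f, g = c·m − h·i, j = m(f−b) + e(e−l), and c(e−h) = c(f−i) = m(e−h) = m(f−i) = (f+i−b)(e−h) = (f+i−b)(f−i) = (e+h−l)(e−h) = (e+h−l)(f−i) = 0. -/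
universe u

/-- Equations for `Alg₃`: the bilinear multiplication on `k³` with basis `1, x, y`
(elements written as triples `(u, v, w) = u·1 + v·x + w·y`, `1` a two-sided unit)
determined by the structure constants
`x² = a + b·x + c·y`, `x·y = d + e·x + f·y`, `y·x = g + h·x + i·y`, `y² = j + m·x + l·y`
is associative if and only if the twelve equations hold:
`a = f(f−b) + c(e−l)`, `d = cm − ef`, `g = cm − hi`, `j = m(f−b) + e(e−l)`, and
`c(e−h) = c(f−i) = m(e−h) = m(f−i) = (f+i−b)(e−h) = (f+i−b)(f−i) = (e+h−l)(e−h)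
= (e+h−l)(f−i) = 0`. -/
theorem alg3_associative_iff
    {k : Type u} [Field k] (a b c d e f g h i j m l : k)
    (mul : (k × k × k) → (k × k × k) → (k × k × k))
    (hmul : ∀ p q : k × k × k, mul p q =
      (p.1 * q.1 + p.2.1 * q.2.1 * a + p.2.1 * q.2.2 * d
          + p.2.2 * q.2.1 * g + p.2.2 * q.2.2 * j,
        p.1 * q.2.1 + p.2.1 * q.1 + p.2.1 * q.2.1 * b + p.2.1 * q.2.2 * e
          + p.2.2 * q.2.1 * h + p.2.2 * q.2.2 * m,
        p.1 * q.2.2 + p.2.2 * q.1 + p.2.1 * q.2.1 * c + p.2.1 * q.2.2 * f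
          + p.2.2 * q.2.1 * i + p.2.2 * q.2.2 * l)) :
    (∀ p q r : k × k × k, mul (mul p q) r = mul p (mul q r)) ↔
      (a = f * (f - b) + c * (e - l)
        ∧ d = c * m - e * f
        ∧ g = c * m - h * i
        ∧ j = m * (f - b) + e * (e - l)
        ∧ c * (e - h) = 0 ∧ c * (f - i) = 0
        ∧ m * (e - h) = 0 ∧ m * (f - i) = 0
        ∧ (f + i - b) * (e - h) = 0 ∧ (f + i - b) * (f - i) = 0
        ∧ (e + h - l) * (e - h) = 0 ∧ (e + h - l) * (f - i) = 0) := by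
  constructor
  · intro H
    have Exxx := H (0,1,0) (0,1,0) (0,1,0)
    have Exxy := H (0,1,0) (0,1,0) (0,0,1)
    have Exyx := H (0,1,0) (0,0,1) (0,1,0)
    have Exyy := H (0,1,0) (0,0,1) (0,0,1)
    have Eyxx := H (0,0,1) (0,1,0) (0,1,0)
    have Eyxy := H (0,0,1) (0,1,0) (0,0,1)
    have Eyyx := H (0,0,1) (0,0,1) (0,1,0)
    have Eyyy := H (0,0,1) (0,0,1) (0,0,1)
    simp only [hmul, Prod.mk.injEq] at Exxx Exxy Exyx Exyy Eyxx Eyxy Eyyx Eyyy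
    obtain ⟨Exxx0, Exxx1, Exxx2⟩ := Exxx
    obtain ⟨Exxy0, Exxy1, Exxy2⟩ := Exxy
    obtain ⟨Exyx0, Exyx1, Exyx2⟩ := Exyx
    obtain ⟨Exyy0, Exyy1, Exyy2⟩ := Exyy
    obtain ⟨Eyxx0, Eyxx1, Eyxx2⟩ := Eyxx
    obtain ⟨Eyxy0, Eyxy1, Eyxy2⟩ := Eyxy
    obtain ⟨Eyyx0, Eyyx1, Eyyx2⟩ := Eyyx
    obtain ⟨Eyyy0, Eyyy1, Eyyy2⟩ := Eyyy
    refine ⟨?_, ?_, ?_, ?_, ?_, ?_, ?_, ?_, ?_, ?_, ?_, ?_⟩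
    · linear_combination Exxy2
    · linear_combination -Exxy1
    · linear_combination Eyxx1
    · linear_combination -Exyy1
    · linear_combination -Exxx1
    · linear_combination -Exxx2
    · linear_combination Eyyy1
    · linear_combination Eyyy2
    · linear_combination -Exxy1 - Eyxx1 - Exyx1
    · linear_combination -Eyxx2 - Exxy2 + Exxx1
    · linear_combination Eyyx1 + Exyy1 - Eyyy2
    · linear_combination Eyxy2 - Eyxx1 - Exxy1
  · rintro ⟨h1, h2, h3, h4, t5, t6, t7, t8, t9, t10, t11, t12⟩ p q r
    simp only [hmul, Prod.mk.injEq]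
    refine ⟨?_, ?_, ?_⟩
    · linear_combination (p.2.1 * q.2.1 * r.2.1) * (c) * h3 + (p.2.1 * q.2.1 * r.2.1) * (-c) * h2 + (p.2.1 * q.2.1 * r.2.1) * (e) * t6 + (p.2.1 * q.2.1 * r.2.1) * (i) * t5 + (p.2.1 * q.2.1 * r.2.2) * ((b-f)) * h2 + (p.2.1 * q.2.1 * r.2.2) * (c) * h4 + (p.2.1 * q.2.1 * r.2.2) * (-e) * h1 + (p.2.1 * q.2.2 * r.2.1) * (f) * h3 + (p.2.1 * q.2.2 * r.2.1) * (-i) * h2 + (p.2.1 * q.2.2 * r.2.1) * ((e-h)) * h1 + (p.2.1 * q.2.2 * r.2.1) * (f) * t9 + (p.2.1 * q.2.2 * r.2.1) * (c) * t8 + (p.2.1 * q.2.2 * r.2.1) * ((e-l)) * t5 + (p.2.1 * q.2.2 * r.2.2) * (f) * h4 + (p.2.1 * q.2.2 * r.2.2) * ((e-l)) * h2 + (p.2.1 * q.2.2 * r.2.2) * (-m) * h1 + (p.2.2 * q.2.1 * r.2.1) * ((i-b)) * h3 + (p.2.2 * q.2.1 * r.2.1) * (-c) * h4 + (p.2.2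 * q.2.1 * r.2.1) * (h) * h1 + (p.2.2 * q.2.1 * r.2.1) * (h) * t10 + (p.2.2 * q.2.1 * r.2.1) * (-c) * t8 + (p.2.2 * q.2.1 * r.2.1) * ((l-e)) * t5 + (p.2.2 * q.2.1 * r.2.2) * ((i-f)) * h4 + (p.2.2 * q.2.1 * r.2.2) * (-e) * h3 + (p.2.2 * q.2.1 * r.2.2) * (h) * h2 + (p.2.2 * q.2.1 * r.2.2) * ((b-f)) * t8 + (p.2.2 * q.2.1 * r.2.2) * (-c) * t7 + (p.2.2 * q.2.1 * r.2.2) * (-e) * t12 + (p.2.2 * q.2.2 * r.2.1) * (-i) * h4 + (p.2.2 * q.2.2 * r.2.1) * ((l-h)) * h3 + (p.2.2 * q.2.2 * r.2.1) * (m) * h1 + (p.2.2 * q.2.2 * r.2.1) * ((f-b)) * t8 + (p.2.2 * q.2.2 * r.2.1) * (c) * t7 + (p.2.2 * q.2.2 * r.2.1) * (-i) * t11 + (p.2.2 * q.2.2 * r.2.2) * (m) * h2 + (p.2.2 * q.2.2 * r.2.2) * (-m) * h3 + (p.2.2 * q.2.2 * r.2.2) * (-e) * t8 + (p.2.2 *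 q.2.2 * r.2.2) * (-i) * t7
    · linear_combination (p.2.1 * q.2.1 * r.2.1) * (-1) * t5 + (p.2.1 * q.2.1 * r.2.2) * (-1) * h2 + (p.2.1 * q.2.2 * r.2.1) * (-1) * h3 + (p.2.1 * q.2.2 * r.2.1) * (1) * h2 + (p.2.1 * q.2.2 * r.2.1) * (-1) * t9 + (p.2.1 * q.2.2 * r.2.2) * (-1) * h4 + (p.2.2 * q.2.1 * r.2.1) * (1) * h3 + (p.2.2 * q.2.1 * r.2.2) * (-1) * t8 + (p.2.2 * q.2.2 * r.2.1) * (1) * h4 + (p.2.2 * q.2.2 * r.2.1) * (1) * t8 + (p.2.2 * q.2.2 * r.2.1) * (1) * t11 + (p.2.2 * q.2.2 * r.2.2) * (1) * t7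
    · linear_combination (p.2.1 * q.2.1 * r.2.1) * (-1) * t6 + (p.2.1 * q.2.1 * r.2.2) * (1) * h1 + (p.2.1 * q.2.2 * r.2.1) * (1) * t5 + (p.2.1 * q.2.2 * r.2.2) * (1) * h2 + (p.2.2 * q.2.1 * r.2.1) * (-1) * h1 + (p.2.2 * q.2.1 * r.2.1) * (-1) * t5 + (p.2.2 * q.2.1 * r.2.1) * (-1) * t10 + (p.2.2 * q.2.1 * r.2.2) * (1) * h3 + (p.2.2 * q.2.1 * r.2.2) * (-1) * h2 + (p.2.2 * q.2.1 * r.2.2) * (1) * t12 + (p.2.2 * q.2.2 * r.2.1) * (-1) * h3 + (p.2.2 * q.2.2 * r.2.2) * (1) * t8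
end
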